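/- arXiv:1809.10953 — 10 statements merged into one kernel-verified Lean document; each statement's English description precedes it below -/
import Mathlib

section
/- Let E be a Polish space (with Borel σ-algebra), let V : E → ℝ be measurable with V(x) ≥ 1 for all x, and let μ₁, μ₂ be Borel probability measures on E with ∫ V dμ₁ < ∞ and ∫ V dμ₂ < ∞. Then ‖μ₁ − μ₂‖_V = inf { ∫_{E×E} d_V(x,y) dν(x,y) : ν a coupling of μ₁ and μ₂ }, and the infimum is attained by some coupling. -/
open MeasureTheory
open scoped ENNReal

/-- The `V`-norm `‖μ₁ - μ₂‖_V = |μ₁ - μ₂|(V)`, where `|μ₁ - μ₂|` is the total variation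
measure of the signed measure `μ₁ - μ₂`. -/
noncomputable def Vnorm {E : Type*} [MeasurableSpace E] (μ₁ μ₂ : Measure E)
    [IsFiniteMeasure μ₁] [IsFiniteMeasure μ₂] (V : E → ℝ) : ℝ≥0∞ :=
  ∫⁻ x, ENNReal.ofReal (V x) ∂((μ₁.toSignedMeasure - μ₂.toSignedMeasure).totalVariation)

/-- `ν` is a coupling of `μ₁` and `μ₂`. -/
def IsCoupling {E : Type*} [MeasurableSpace E] (ν : Measure (E × E)) (μ₁ μ₂ : Measure E) : Prop :=
  ν.map Prod.fst = μ₁ ∧ ν.map Prod.snd = μ₂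

/-- The cost function `d_V(x,y) = 𝟙_{x ≠ y} (V x + V y)`. -/
noncomputable def dVcost {E : Type*} (V : E → ℝ) (p : E × E) : ℝ≥0∞ :=
  {q : E × E | q.1 ≠ q.2}.indicator
    (fun q => ENNReal.ofReal (V q.1) + ENNReal.ofReal (V q.2)) p

/-- `‖μ₁ - μ₂‖_V` is the infimum of `∫ d_V dν` over all couplings `ν` of `μ₁` and `μ₂`,
and this infimum is attained. -/
theorem vnorm_eq_inf_coupling_and_attained
    {E : Type*} [MeasurableSpace E] [TopologicalSpace E] [PolishSpace E] [BorelSpace E]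
    (V : E → ℝ) (hVmeas : Measurable V) (hV1 : ∀ x, 1 ≤ V x)
    (μ₁ μ₂ : Measure E) [IsProbabilityMeasure μ₁] [IsProbabilityMeasure μ₂]
    (h₁ : ∫⁻ x, ENNReal.ofReal (V x) ∂μ₁ < ⊤) (h₂ : ∫⁻ x, ENNReal.ofReal (V x) ∂μ₂ < ⊤) :
    IsLeast {r : ℝ≥0∞ | ∃ ν : Measure (E × E), IsProbabilityMeasure ν ∧ IsCoupling ν μ₁ μ₂ ∧
        r = ∫⁻ p, dVcost V p ∂ν}
      (Vnorm μ₁ μ₂ V) := by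
  classical
  set F : E → ℝ≥0∞ := fun x => ENNReal.ofReal (V x) with hF_def
  have hF : Measurable F := hVmeas.ennreal_ofReal
  set D : Set (E × E) := {q : E × E | q.1 ≠ q.2} with hD_def
  have hD : MeasurableSet D := by
    have : D = (Set.diagonal E)ᶜ := rfl
    rw [this]
    exact isClosed_diagonal.measurableSet.compl
  have hfmeas : Measurable (fun q : E × E => F q.1 + F q.2) :=
    (hF.comp measurable_fst).add (hF.comp measurable_snd)
  have hdVmeas : Measurable (dVcost V) := hfmeas.indicator hD
  set s : SignedMeasure E := μ₁.toSignedMeasure - μ₂.toSignedMeasure with hs_def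
  set p : Measure E := s.toJordanDecomposition.posPart with hp_def
  set n : Measure E := s.toJordanDecomposition.negPart with hn_def
  obtain ⟨u, hu, hpu, hnu⟩ := s.toJordanDecomposition.mutuallySingular
  -- the basic Jordan decomposition identity
  have keyA : ∀ B : Set E, MeasurableSet B →
      (μ₁ B).toReal - (μ₂ B).toReal = (p B).toReal - (n B).toReal := by
    intro B hB
    have h1 : s B = (μ₁ B).toReal - (μ₂ B).toReal := Measure.toSignedMeasure_sub_apply hB
    have h3 : (p.toSignedMeasure - n.toSignedMeasure) = s :=
      s.toSignedMeasure_toJordanDecomposition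
    rw [← h1, ← h3, Measure.toSignedMeasure_sub_apply hB]; rfl
  -- key identities
  have key1 : ∀ B : Set E, MeasurableSet B → μ₁ (B \ u) = μ₂ (B \ u) + p B := by
    intro B hB
    have hB' : MeasurableSet (B \ u) := hB.diff hu
    have hpB : p (B \ u) = p B := measure_diff_null hpu
    have hnB : n (B \ u) = 0 :=
      measure_mono_null (fun x hx => hx.2) hnu
    have h := keyA _ hB'
    rw [hpB, hnB] at h
    have h' : (μ₁ (B \ u)).toReal = (μ₂ (B \ u) + p B).toReal := by
      rw [ENNReal.toReal_add (measure_ne_top _ _) (measure_ne_top _ _)]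
      simp only [ENNReal.toReal_zero] at h
      linarith
    exact (ENNReal.toReal_eq_toReal_iff' (measure_ne_top _ _)
      (ENNReal.add_ne_top.2 ⟨measure_ne_top _ _, measure_ne_top _ _⟩)).1 h'
  have key2 : ∀ B : Set E, MeasurableSet B → μ₂ (B \ uᶜ) = μ₁ (B \ uᶜ) + n B := by
    intro B hB
    have hB' : MeasurableSet (B \ uᶜ) := hB.diff hu.compl
    have hnB : n (B \ uᶜ) = n B := measure_diff_null hnu
    have hpB : p (B \ uᶜ) = 0 :=
      measure_mono_null (fun x hx => not_not.1 hx.2) hpu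
    have h := keyA _ hB'
    rw [hpB, hnB] at h
    have h' : (μ₂ (B \ uᶜ)).toReal = (μ₁ (B \ uᶜ) + n B).toReal := by
      rw [ENNReal.toReal_add (measure_ne_top _ _) (measure_ne_top _ _)]
      simp only [ENNReal.toReal_zero] at h
      linarith
    exact (ENNReal.toReal_eq_toReal_iff' (measure_ne_top _ _)
      (ENNReal.add_ne_top.2 ⟨measure_ne_top _ _, measure_ne_top _ _⟩)).1 h'
  have hsplit₀ : ∀ (μ : Measure E) (B : Set E), μ (B \ uᶜ) + μ (B \ u) = μ B := by
    intro μ B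
    have : B ∩ u = B \ uᶜ := by simp [Set.diff_compl]
    rw [← this, measure_inter_add_diff B hu]
  have hμn : ∀ B : Set E, MeasurableSet B → μ₁ B + n B = μ₂ B + p B := by
    intro B hB
    calc μ₁ B + n B = μ₁ (B \ uᶜ) + n B + μ₁ (B \ u) := by
          rw [← hsplit₀ μ₁ B]; ring
      _ = μ₂ (B \ uᶜ) + (μ₂ (B \ u) + p B) := by rw [← key2 B hB, key1 B hB]
      _ = μ₂ B + p B := by rw [← hsplit₀ μ₂ B]; ring
  have hnu_eq : n Set.univ = p Set.univ := by
    have h := hμn Set.univ MeasurableSet.univ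
    simp only [measure_univ] at h
    exact (ENNReal.add_right_inj ENNReal.one_ne_top).1 h
  have hp_leB : ∀ B : Set E, MeasurableSet B → p B ≤ μ₁ B := by
    intro B hB
    calc p B ≤ μ₂ (B \ u) + p B := le_add_self
      _ = μ₁ (B \ u) := (key1 B hB).symm
      _ ≤ μ₁ B := measure_mono Set.diff_subset
  have hp_le : p ≤ μ₁ := Measure.le_iff.2 hp_leB
  set lam : Measure E := μ₁ - p with hlam_def
  have hlam1 : lam + p = μ₁ := Measure.sub_add_cancel_of_le hp_le
  have hlam2 : lam + n = μ₂ := by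
    ext B hB
    rw [Measure.add_apply, Measure.sub_apply hB hp_le]
    have hfin : p B ≠ ⊤ := measure_ne_top _ _
    have hcalc : μ₁ B - p B + n B + p B = μ₂ B + p B := by
      rw [add_right_comm, tsub_add_cancel_of_le (hp_leB B hB), hμn B hB]
    exact WithTop.add_right_cancel hfin hcalc
  -- diagonal map
  have hdiag : Measurable (fun x : E => (x, x)) := measurable_id.prodMk measurable_id
  have hdiag_cost : ∀ (μ : Measure E), ∫⁻ q, dVcost V q ∂(μ.map (fun x => (x, x))) = 0 := by
    intro μ
    rw [lintegral_map hdVmeas hdiag]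
    have : ∀ x : E, dVcost V (x, x) = 0 := by
      intro x
      exact Set.indicator_of_notMem (by simp) _
    simp [this]
  have hdiag_fst : ∀ (μ : Measure E), (μ.map (fun x => (x, x))).map Prod.fst = μ := by
    intro μ
    rw [Measure.map_map measurable_fst hdiag]
    exact Measure.map_id
  have hdiag_snd : ∀ (μ : Measure E), (μ.map (fun x => (x, x))).map Prod.snd = μ := by
    intro μ
    rw [Measure.map_map measurable_snd hdiag]
    exact Measure.map_id
  have hVnorm : Vnorm μ₁ μ₂ V = ∫⁻ x, F x ∂p + ∫⁻ x, F x ∂n := by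
    rw [Vnorm]
    exact lintegral_add_measure _ _ _
  have hprob_of_fst : ∀ ν : Measure (E × E), ν.map Prod.fst = μ₁ → IsProbabilityMeasure ν := by
    intro ν hν
    constructor
    have : ν Set.univ = (ν.map Prod.fst) Set.univ := by
      rw [Measure.map_apply measurable_fst MeasurableSet.univ, Set.preimage_univ]
    rw [this, hν, measure_univ]
  constructor
  · -- membership: the infimum is attained
    by_cases hm : p Set.univ = 0
    · -- μ₁ = μ₂ ; diagonal coupling
      have hp0 : p = 0 := Measure.measure_univ_eq_zero.1 hm
      have hn0 : n = 0 := Measure.measure_univ_eq_zero.1 (by rw [hnu_eq, hm])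
      refine ⟨μ₁.map (fun x => (x, x)), hprob_of_fst _ (hdiag_fst μ₁), ⟨hdiag_fst μ₁, ?_⟩, ?_⟩
      · rw [hdiag_snd μ₁]
        ext B hB
        have h := hμn B hB
        rw [hp0, hn0] at h
        simpa using h
      · rw [hdiag_cost μ₁, hVnorm, hp0, hn0]
        simp
    · -- nontrivial case
      have hm' : p Set.univ ≠ ⊤ := measure_ne_top _ _
      set m : ℝ≥0∞ := p Set.univ with hm_def
      set ν : Measure (E × E) := lam.map (fun x => (x, x)) + (m⁻¹) • (p.prod n) with hν_def
      have hνfst : ν.map Prod.fst = μ₁ := by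
        rw [hν_def, Measure.map_add _ _ measurable_fst, Measure.map_smul,
          hdiag_fst lam, Measure.map_fst_prod, hnu_eq, smul_smul,
          ENNReal.inv_mul_cancel hm hm', one_smul, hlam1]
      have hνsnd : ν.map Prod.snd = μ₂ := by
        rw [hν_def, Measure.map_add _ _ measurable_snd, Measure.map_smul,
          hdiag_snd lam, Measure.map_snd_prod, smul_smul,
          ENNReal.inv_mul_cancel hm hm', one_smul, hlam2]
      refine ⟨ν, hprob_of_fst ν hνfst, ⟨hνfst, hνsnd⟩, ?_⟩
      -- compute the cost
      have hDcnull : (p.prod n) Dᶜ = 0 := by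
        have hsub : Dᶜ ⊆ (u ×ˢ Set.univ) ∪ (Set.univ ×ˢ uᶜ) := by
          intro q hq
          have hq' : q.1 = q.2 := not_not.1 hq
          by_cases h : q.1 ∈ u
          · exact Or.inl ⟨h, trivial⟩
          · exact Or.inr ⟨trivial, hq' ▸ h⟩
        refine measure_mono_null hsub (le_antisymm ?_ zero_le)
        calc (p.prod n) ((u ×ˢ Set.univ) ∪ (Set.univ ×ˢ uᶜ))
            ≤ (p.prod n) (u ×ˢ Set.univ) + (p.prod n) (Set.univ ×ˢ uᶜ) := measure_union_le _ _
          _ = 0 := by rw [Measure.prod_prod, Measure.prod_prod, hpu, hnu]; ring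
      have hprodcost : ∫⁻ q, dVcost V q ∂(p.prod n) =
          m * ((∫⁻ x, F x ∂p) + (∫⁻ x, F x ∂n)) := by
        have hrestr : (p.prod n).restrict D = p.prod n :=
          Measure.restrict_eq_self_of_ae_mem (by
            rw [ae_iff]
            exact hDcnull)
        calc ∫⁻ q, dVcost V q ∂(p.prod n)
            = ∫⁻ q in D, (F q.1 + F q.2) ∂(p.prod n) := lintegral_indicator hD _
          _ = ∫⁻ q, (F q.1 + F q.2) ∂(p.prod n) := by rw [hrestr]
          _ = (∫⁻ q, F q.1 ∂(p.prod n)) + ∫⁻ q, F q.2 ∂(p.prod n) :=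
              lintegral_add_left (hF.comp measurable_fst) _
          _ = (∫⁻ x, F x ∂((p.prod n).map Prod.fst)) + ∫⁻ x, F x ∂((p.prod n).map Prod.snd) := by
              rw [lintegral_map hF measurable_fst, lintegral_map hF measurable_snd]
          _ = m * ((∫⁻ x, F x ∂p) + (∫⁻ x, F x ∂n)) := by
              rw [Measure.map_fst_prod, Measure.map_snd_prod, hnu_eq,
                lintegral_smul_measure, lintegral_smul_measure, mul_add, smul_eq_mul, smul_eq_mul]
      rw [hν_def, lintegral_add_measure, hdiag_cost lam, lintegral_smul_measure, hprodcost,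
        smul_eq_mul, ← mul_assoc, ENNReal.inv_mul_cancel hm hm', one_mul, zero_add, hVnorm]
  · -- lower bound
    rintro r ⟨ν, hνP, ⟨hν1, hν2⟩, rfl⟩
    set ρ : Measure (E × E) := ν.restrict D with hρ_def
    have hρfst : p ≤ ρ.map Prod.fst := by
      rw [Measure.le_iff]
      intro B hB
      set C : Set E := B \ u with hC_def
      have hC : MeasurableSet C := hB.diff hu
      have hkey : μ₁ C = μ₂ C + p B := key1 B hB
      have hμ1C : μ₁ C = ν (Prod.fst ⁻¹' C) := by
        rw [← hν1, Measure.map_apply measurable_fst hC]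
      have hμ2C : μ₂ C = ν (Prod.snd ⁻¹' C) := by
        rw [← hν2, Measure.map_apply measurable_snd hC]
      have hsplit : ν (Prod.fst ⁻¹' C) =
          ν (Prod.fst ⁻¹' C ∩ Prod.snd ⁻¹' C) + ν (Prod.fst ⁻¹' C \ Prod.snd ⁻¹' C) :=
        (measure_inter_add_diff _ (measurable_snd hC)).symm
      have hmono : ν (Prod.fst ⁻¹' C ∩ Prod.snd ⁻¹' C) ≤ ν (Prod.snd ⁻¹' C) :=
        measure_mono Set.inter_subset_right
      have h1 : p B ≤ ν (Prod.fst ⁻¹' C \ Prod.snd ⁻¹' C) := by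
        have hfin : ν (Prod.fst ⁻¹' C ∩ Prod.snd ⁻¹' C) ≠ ⊤ := measure_ne_top _ _
        have h2 : ν (Prod.fst ⁻¹' C ∩ Prod.snd ⁻¹' C) + p B ≤
            ν (Prod.fst ⁻¹' C ∩ Prod.snd ⁻¹' C) + ν (Prod.fst ⁻¹' C \ Prod.snd ⁻¹' C) := by
          rw [← hsplit, ← hμ1C, hkey]
          exact add_le_add (hμ2C ▸ hmono) le_rfl
        exact (ENNReal.add_le_add_iff_left hfin).1 h2
      refine h1.trans ?_
      have hsub : Prod.fst ⁻¹' C \ Prod.snd ⁻¹' C ⊆ Prod.fst ⁻¹' B ∩ D := by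
        rintro q ⟨hq1, hq2⟩
        refine ⟨hq1.1, fun h => hq2 ?_⟩
        show q.2 ∈ C
        rw [← h]; exact hq1
      calc ν (Prod.fst ⁻¹' C \ Prod.snd ⁻¹' C) ≤ ν (Prod.fst ⁻¹' B ∩ D) := measure_mono hsub
        _ = (ρ.map Prod.fst) B := by
            rw [Measure.map_apply measurable_fst hB, hρ_def,
              Measure.restrict_apply (measurable_fst hB)]
    have hρsnd : n ≤ ρ.map Prod.snd := by
      rw [Measure.le_iff]
      intro B hB
      set C : Set E := B \ uᶜ with hC_def
      have hC : MeasurableSet C := hB.diff hu.compl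
      have hkey : μ₂ C = μ₁ C + n B := key2 B hB
      have hμ1C : μ₁ C = ν (Prod.fst ⁻¹' C) := by
        rw [← hν1, Measure.map_apply measurable_fst hC]
      have hμ2C : μ₂ C = ν (Prod.snd ⁻¹' C) := by
        rw [← hν2, Measure.map_apply measurable_snd hC]
      have hsplit : ν (Prod.snd ⁻¹' C) =
          ν (Prod.snd ⁻¹' C ∩ Prod.fst ⁻¹' C) + ν (Prod.snd ⁻¹' C \ Prod.fst ⁻¹' C) :=
        (measure_inter_add_diff _ (measurable_fst hC)).symm
      have hmono : ν (Prod.snd ⁻¹' C ∩ Prod.fst ⁻¹' C) ≤ ν (Prod.fst ⁻¹' C) :=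
        measure_mono Set.inter_subset_right
      have h1 : n B ≤ ν (Prod.snd ⁻¹' C \ Prod.fst ⁻¹' C) := by
        have hfin : ν (Prod.snd ⁻¹' C ∩ Prod.fst ⁻¹' C) ≠ ⊤ := measure_ne_top _ _
        have h2 : ν (Prod.snd ⁻¹' C ∩ Prod.fst ⁻¹' C) + n B ≤
            ν (Prod.snd ⁻¹' C ∩ Prod.fst ⁻¹' C) + ν (Prod.snd ⁻¹' C \ Prod.fst ⁻¹' C) := by
          rw [← hsplit, ← hμ2C, hkey]
          exact add_le_add (hμ1C ▸ hmono) le_rfl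
        exact (ENNReal.add_le_add_iff_left hfin).1 h2
      refine h1.trans ?_
      have hsub : Prod.snd ⁻¹' C \ Prod.fst ⁻¹' C ⊆ Prod.snd ⁻¹' B ∩ D := by
        rintro q ⟨hq1, hq2⟩
        refine ⟨hq1.1, fun h => hq2 ?_⟩
        show q.1 ∈ C
        rw [h]; exact hq1
      calc ν (Prod.snd ⁻¹' C \ Prod.fst ⁻¹' C) ≤ ν (Prod.snd ⁻¹' B ∩ D) := measure_mono hsub
        _ = (ρ.map Prod.snd) B := by
            rw [Measure.map_apply measurable_snd hB, hρ_def,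
              Measure.restrict_apply (measurable_snd hB)]
    calc Vnorm μ₁ μ₂ V = (∫⁻ x, F x ∂p) + ∫⁻ x, F x ∂n := hVnorm
      _ ≤ (∫⁻ x, F x ∂(ρ.map Prod.fst)) + ∫⁻ x, F x ∂(ρ.map Prod.snd) :=
          add_le_add (lintegral_mono' hρfst le_rfl) (lintegral_mono' hρsnd le_rfl)
      _ = (∫⁻ q, F q.1 ∂ρ) + ∫⁻ q, F q.2 ∂ρ := by
          rw [lintegral_map hF measurable_fst, lintegral_map hF measurable_snd]
      _ = ∫⁻ q, (F q.1 + F q.2) ∂ρ := (lintegral_add_left (hF.comp measurable_fst) _).symm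
      _ = ∫⁻ q, dVcost V q ∂ν := (lintegral_indicator hD _).symm
end

section
/- Let E be a Polish space, V : E → ℝ measurable with V ≥ 1, and μ₁, μ₂ Borel probability measures on E with ∫ V dμ₁ < ∞ and ∫ V dμ₂ < ∞. Then for every coupling ν of μ₁ and μ₂ one has ∫_{E×E} 𝟙_{x≠y}(V(x)+V(y)) dν(x,y) ≥ ‖μ₁ − μ₂‖_V. -/
open MeasureTheory
open scoped ENNReal

/-- Minimality of the Jordan decomposition: if `μ₁ + α₂ = μ₂ + α₁`, then the total variation
of `μ₁ - μ₂` is bounded by `α₁ + α₂`. -/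
lemma totalVariation_le_of_add_eq_add {E : Type*} [MeasurableSpace E]
    (μ₁ μ₂ α₁ α₂ : Measure E) [IsFiniteMeasure μ₁] [IsFiniteMeasure μ₂]
    [IsFiniteMeasure α₁] [IsFiniteMeasure α₂] (h : μ₁ + α₂ = μ₂ + α₁) :
    (μ₁.toSignedMeasure - μ₂.toSignedMeasure).totalVariation ≤ α₁ + α₂ := by
  set s := μ₁.toSignedMeasure - μ₂.toSignedMeasure with hs
  have key : ∀ B : Set E, MeasurableSet B →
      s B = (α₁ B).toReal - (α₂ B).toReal := by
    intro B hB
    have hEB : μ₁ B + α₂ B = μ₂ B + α₁ B := by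
      have := congrArg (fun m : Measure E => m B) h
      simpa using this
    have h1 : (μ₁ B).toReal + (α₂ B).toReal = (μ₂ B).toReal + (α₁ B).toReal := by
      rw [← ENNReal.toReal_add (measure_ne_top _ _) (measure_ne_top _ _),
        ← ENNReal.toReal_add (measure_ne_top _ _) (measure_ne_top _ _), hEB]
    rw [hs, Measure.toSignedMeasure_sub_apply hB]
    have e1 : μ₁.real B = (μ₁ B).toReal := rfl
    have e2 : μ₂.real B = (μ₂ B).toReal := rfl
    linarith
  refine Measure.le_iff.2 fun B hB => ?_
  obtain ⟨i, hi₁, hi₂, hi₃, hpos, hneg⟩ := s.toJordanDecomposition_spec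
  rw [SignedMeasure.totalVariation, Measure.add_apply, hpos, hneg,
    SignedMeasure.toMeasureOfZeroLE_apply _ hi₂ hi₁ hB,
    SignedMeasure.toMeasureOfLEZero_apply _ hi₃ hi₁.compl hB]
  rw [Measure.add_apply]
  refine add_le_add ?_ ?_
  · rw [← ENNReal.ofReal_eq_coe_nnreal]
    refine ENNReal.ofReal_le_of_le_toReal ?_
    rw [key _ (hi₁.inter hB)]
    have : (α₁ (i ∩ B)).toReal ≤ (α₁ B).toReal :=
      ENNReal.toReal_mono (measure_ne_top _ _) (measure_mono Set.inter_subset_right)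
    have h0 : 0 ≤ (α₂ (i ∩ B)).toReal := ENNReal.toReal_nonneg
    linarith
  · rw [← ENNReal.ofReal_eq_coe_nnreal]
    refine ENNReal.ofReal_le_of_le_toReal ?_
    rw [key _ (hi₁.compl.inter hB)]
    have : (α₂ (iᶜ ∩ B)).toReal ≤ (α₂ B).toReal :=
      ENNReal.toReal_mono (measure_ne_top _ _) (measure_mono Set.inter_subset_right)
    have h0 : 0 ≤ (α₁ (iᶜ ∩ B)).toReal := ENNReal.toReal_nonneg
    linarith

/-- For every coupling `ν` of `μ₁` and `μ₂`,
`∫ 𝟙_{x ≠ y} (V x + V y) dν(x,y) ≥ ‖μ₁ - μ₂‖_V`. -/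
theorem vnorm_le_coupling_cost
    {E : Type*} [MeasurableSpace E] [TopologicalSpace E] [PolishSpace E] [BorelSpace E]
    (V : E → ℝ) (hVmeas : Measurable V) (hV1 : ∀ x, 1 ≤ V x)
    (μ₁ μ₂ : Measure E) [IsProbabilityMeasure μ₁] [IsProbabilityMeasure μ₂]
    (h₁ : ∫⁻ x, ENNReal.ofReal (V x) ∂μ₁ < ⊤) (h₂ : ∫⁻ x, ENNReal.ofReal (V x) ∂μ₂ < ⊤)
    (ν : Measure (E × E)) [IsProbabilityMeasure ν] (hν : IsCoupling ν μ₁ μ₂) :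
    Vnorm μ₁ μ₂ V ≤
      ∫⁻ p, {q : E × E | q.1 ≠ q.2}.indicator
        (fun q => ENNReal.ofReal (V q.1) + ENNReal.ofReal (V q.2)) p ∂ν := by
  obtain ⟨hν₁, hν₂⟩ := hν
  set D : Set (E × E) := Set.diagonal E with hDdef
  have hD : MeasurableSet D := isClosed_diagonal.measurableSet
  set α₁ : Measure E := (ν.restrict Dᶜ).map Prod.fst with hα₁
  set α₂ : Measure E := (ν.restrict Dᶜ).map Prod.snd with hα₂
  set η₁ : Measure E := (ν.restrict D).map Prod.fst with hη₁
  set η₂ : Measure E := (ν.restrict D).map Prod.snd with hη₂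
  have hfin : ∀ (S : Set (E × E)) (f : E × E → E), Measurable f →
      IsFiniteMeasure ((ν.restrict S).map f) := by
    intro S f hf
    constructor
    rw [Measure.map_apply hf MeasurableSet.univ]
    exact lt_of_le_of_lt (measure_mono (Set.subset_univ _))
      (lt_of_le_of_lt (Measure.restrict_le_self _) (by simp [measure_lt_top]))
  haveI := hfin Dᶜ Prod.fst measurable_fst
  haveI := hfin Dᶜ Prod.snd measurable_snd
  haveI := hfin D Prod.fst measurable_fst
  haveI := hfin D Prod.snd measurable_snd
  have hηeq : η₁ = η₂ := by
    ext A hA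
    rw [hη₁, hη₂, Measure.map_apply measurable_fst hA, Measure.map_apply measurable_snd hA,
      Measure.restrict_apply (measurable_fst hA), Measure.restrict_apply (measurable_snd hA)]
    congr 1
    ext ⟨x, y⟩
    simp only [Set.mem_inter_iff, Set.mem_preimage, hDdef, Set.mem_diagonal_iff]
    constructor
    · rintro ⟨hx, hxy⟩; exact ⟨hxy ▸ hx, hxy⟩
    · rintro ⟨hy, hxy⟩; exact ⟨hxy ▸ hy, hxy⟩
  have hsplit : ∀ f : E × E → E, Measurable f →
      ν.map f = (ν.restrict D).map f + (ν.restrict Dᶜ).map f := by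
    intro f hf
    conv_lhs => rw [← Measure.restrict_add_restrict_compl (μ := ν) hD]
    exact Measure.map_add _ _ hf
  have hμ₁ : μ₁ = η₁ + α₁ := by rw [← hν₁, hsplit Prod.fst measurable_fst]
  have hμ₂ : μ₂ = η₂ + α₂ := by rw [← hν₂, hsplit Prod.snd measurable_snd]
  have hadd : μ₁ + α₂ = μ₂ + α₁ := by
    rw [hμ₁, hμ₂, hηeq]; abel
  have htv := totalVariation_le_of_add_eq_add μ₁ μ₂ α₁ α₂ hadd
  have step1 : Vnorm μ₁ μ₂ V ≤ ∫⁻ x, ENNReal.ofReal (V x) ∂(α₁ + α₂) :=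
    lintegral_mono' htv le_rfl
  have hVE : Measurable fun x => ENNReal.ofReal (V x) :=
    ENNReal.measurable_ofReal.comp hVmeas
  have step2 : ∫⁻ x, ENNReal.ofReal (V x) ∂(α₁ + α₂)
      = ∫⁻ p, Dᶜ.indicator (fun q => ENNReal.ofReal (V q.1) + ENNReal.ofReal (V q.2)) p ∂ν := by
    rw [lintegral_add_measure, hα₁, hα₂,
      lintegral_map hVE measurable_fst, lintegral_map hVE measurable_snd,
      ← lintegral_indicator hD.compl, ← lintegral_indicator hD.compl]
    have hf : Measurable fun a : E × E => Dᶜ.indicator (fun q => ENNReal.ofReal (V q.1)) a :=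
      (hVE.comp measurable_fst).indicator hD.compl
    rw [← lintegral_add_left hf]
    congr 1
    funext p
    by_cases hp : p ∈ Dᶜ <;> simp [hp]
  have hset : {q : E × E | q.1 ≠ q.2} = Dᶜ := by
    ext ⟨x, y⟩
    simp [hDdef, Set.mem_diagonal_iff]
  rw [hset]
  exact step2 ▸ step1
end

section
/- Let E be a Polish space and μ₁, μ₂ Borel probability measures on E. There exists a coupling ν of μ₁ and μ₂ such that for EVERY measurable function V : E → [0,∞], ∫_{E×E} 𝟙_{x≠y}(V(x)+V(y)) dν(x,y) = |μ₁−μ₂|(V). In particular a single coupling realizes the infimum of ∫ d_V dν over couplings simultaneously for all V, i.e. the optimal coupling does not depend on V. -/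
open MeasureTheory
open scoped ENNReal
open Set

/-- There exists a single coupling `ν` of `μ₁` and `μ₂` which is optimal simultaneously for
all cost functions `d_V(x,y) = 𝟙_{x ≠ y}(V x + V y)`: for every measurable `V : E → [0,∞]`,
`∫ d_V dν = |μ₁ - μ₂|(V)`. -/
theorem exists_coupling_optimal_for_all_V
    {E : Type*} [MeasurableSpace E] [TopologicalSpace E] [PolishSpace E] [BorelSpace E]
    (μ₁ μ₂ : Measure E) [IsProbabilityMeasure μ₁] [IsProbabilityMeasure μ₂] :
    ∃ ν : Measure (E × E), IsProbabilityMeasure ν ∧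
      ν.map Prod.fst = μ₁ ∧ ν.map Prod.snd = μ₂ ∧
      ∀ V : E → ℝ≥0∞, Measurable V →
        ∫⁻ p, {q : E × E | q.1 ≠ q.2}.indicator (fun q => V q.1 + V q.2) p ∂ν =
          ∫⁻ x, V x ∂((μ₁.toSignedMeasure - μ₂.toSignedMeasure).totalVariation) := by
  -- Hahn decomposition
  obtain ⟨A, hA, hA₁, hA₂⟩ := hahn_decomposition (μ := μ₁) (ν := μ₂)
  set ξ : Measure E := μ₁.restrict A - μ₂.restrict A with hξdef
  set η : Measure E := μ₂.restrict Aᶜ - μ₁.restrict Aᶜ with hηdef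
  set lam : Measure E := μ₂.restrict A + μ₁.restrict Aᶜ with hlamdef
  have hle₁ : μ₂.restrict A ≤ μ₁.restrict A := by
    refine Measure.le_iff.2 fun s hs => ?_
    rw [Measure.restrict_apply hs, Measure.restrict_apply hs]
    exact hA₁ _ (hs.inter hA) (inter_subset_right)
  have hle₂ : μ₁.restrict Aᶜ ≤ μ₂.restrict Aᶜ := by
    refine Measure.le_iff.2 fun s hs => ?_
    rw [Measure.restrict_apply hs, Measure.restrict_apply hs]
    exact hA₂ _ (hs.inter hA.compl) (inter_subset_right)
  have hξle : ξ ≤ μ₁.restrict A := Measure.sub_le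
  have hηle : η ≤ μ₂.restrict Aᶜ := Measure.sub_le
  haveI : IsFiniteMeasure ξ := isFiniteMeasure_of_le _ hξle
  haveI : IsFiniteMeasure η := isFiniteMeasure_of_le _ hηle
  haveI : IsFiniteMeasure lam := by infer_instance
  have hμ₁ : lam + ξ = μ₁ := by
    rw [hlamdef, hξdef]
    calc μ₂.restrict A + μ₁.restrict Aᶜ + (μ₁.restrict A - μ₂.restrict A)
        = (μ₁.restrict A - μ₂.restrict A + μ₂.restrict A) + μ₁.restrict Aᶜ := by ac_rfl
      _ = μ₁.restrict A + μ₁.restrict Aᶜ := by rw [Measure.sub_add_cancel_of_le hle₁]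
      _ = μ₁ := Measure.restrict_add_restrict_compl hA
  have hμ₂ : lam + η = μ₂ := by
    rw [hlamdef, hηdef]
    calc μ₂.restrict A + μ₁.restrict Aᶜ + (μ₂.restrict Aᶜ - μ₁.restrict Aᶜ)
        = (μ₂.restrict Aᶜ - μ₁.restrict Aᶜ + μ₁.restrict Aᶜ) + μ₂.restrict A := by ac_rfl
      _ = μ₂.restrict Aᶜ + μ₂.restrict A := by rw [Measure.sub_add_cancel_of_le hle₂]
      _ = μ₂ := Measure.restrict_compl_add_restrict hA
  have hξAc : ξ Aᶜ = 0 := le_antisymm (by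
      calc ξ Aᶜ ≤ (μ₁.restrict A) Aᶜ := hξle Aᶜ
      _ = μ₁ (Aᶜ ∩ A) := Measure.restrict_apply hA.compl
      _ = 0 := by rw [compl_inter_self, measure_empty]) (zero_le)
  have hηA : η A = 0 := le_antisymm (by
      calc η A ≤ (μ₂.restrict Aᶜ) A := hηle A
      _ = μ₂ (A ∩ Aᶜ) := Measure.restrict_apply hA
      _ = 0 := by rw [inter_compl_self, measure_empty]) (zero_le)
  have hsing : ξ ⟂ₘ η := ⟨Aᶜ, hA.compl, hξAc, by rwa [compl_compl]⟩
  set J : JordanDecomposition E := ⟨ξ, η, hsing⟩ with hJ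
  -- total variation
  have hsm : μ₁.toSignedMeasure - μ₂.toSignedMeasure = J.toSignedMeasure := by
    rw [JordanDecomposition.toSignedMeasure]
    have e1 : μ₁.toSignedMeasure = lam.toSignedMeasure + ξ.toSignedMeasure :=
      (Measure.toSignedMeasure_congr hμ₁.symm).trans (Measure.toSignedMeasure_add lam ξ)
    have e2 : μ₂.toSignedMeasure = lam.toSignedMeasure + η.toSignedMeasure :=
      (Measure.toSignedMeasure_congr hμ₂.symm).trans (Measure.toSignedMeasure_add lam η)
    rw [e1, e2]; abel
  have hTV : (μ₁.toSignedMeasure - μ₂.toSignedMeasure).totalVariation = ξ + η := by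
    rw [hsm, SignedMeasure.totalVariation, JordanDecomposition.toJordanDecomposition_toSignedMeasure]
  -- mass
  set m : ℝ≥0∞ := ξ univ with hm
  have hmη : η univ = m := by
    have h1 : lam univ + ξ univ = 1 := by
      have := congrArg (fun μ : Measure E => μ univ) hμ₁
      simpa using this
    have h2 : lam univ + η univ = 1 := by
      have := congrArg (fun μ : Measure E => μ univ) hμ₂
      simpa using this
    have hlamfin : lam univ ≠ ∞ := measure_ne_top _ _
    rw [hm]
    exact (ENNReal.add_right_inj hlamfin).1 (h2.trans h1.symm)
  have hmfin : m ≠ ∞ := measure_ne_top _ _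
  -- measurability of the off-diagonal set
  have hD : MeasurableSet {q : E × E | q.1 ≠ q.2} := by
    have h : {q : E × E | q.1 ≠ q.2} = (Set.diagonal E)ᶜ := by
      ext p; simp [Set.diagonal, eq_comm]
    rw [h]
    exact isClosed_diagonal.measurableSet.compl
  have hdiagmeas : Measurable (fun x : E => (x, x)) := measurable_id.prodMk measurable_id
  -- the zero-on-diagonal integral
  have hdiag_int : ∀ (ρ : Measure E) (V : E → ℝ≥0∞), Measurable V →
      ∫⁻ p, {q : E × E | q.1 ≠ q.2}.indicator (fun q => V q.1 + V q.2) p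
        ∂(ρ.map (fun x => (x, x))) = 0 := by
    intro ρ V hV
    rw [lintegral_map (Measurable.indicator (by fun_prop) hD) hdiagmeas]
    simp
  by_cases hm0 : m = 0
  · -- ξ = η = 0, use the diagonal coupling
    have hξ0 : ξ = 0 := Measure.measure_univ_eq_zero.1 hm0
    have hη0 : η = 0 := Measure.measure_univ_eq_zero.1 (by rw [hmη]; exact hm0)
    have hlameq : lam = μ₁ := by rw [← hμ₁, hξ0, add_zero]
    refine ⟨μ₁.map (fun x => (x, x)), ?_, ?_, ?_, ?_⟩
    · exact Measure.isProbabilityMeasure_map hdiagmeas.aemeasurable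
    · rw [Measure.map_map measurable_fst hdiagmeas]
      have h : (Prod.fst ∘ fun x : E => (x, x)) = id := rfl
      rw [h, Measure.map_id]
    · rw [Measure.map_map measurable_snd hdiagmeas]
      have h : (Prod.snd ∘ fun x : E => (x, x)) = id := rfl
      rw [h, Measure.map_id]
      rw [← hμ₁, ← hμ₂, hξ0, hη0]
    · intro V hV
      rw [hdiag_int μ₁ V hV, hTV, hξ0, hη0]
      simp
  · -- ξ univ = η univ = m ≠ 0 : mixed coupling
    set ν : Measure (E × E) := lam.map (fun x => (x, x)) + m⁻¹ • ξ.prod η with hν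
    have hfst : ν.map Prod.fst = μ₁ := by
      have h : (Prod.fst ∘ fun x : E => (x, x)) = id := rfl
      rw [hν, Measure.map_add _ _ measurable_fst, Measure.map_smul,
        Measure.map_fst_prod, Measure.map_map measurable_fst hdiagmeas, h, Measure.map_id,
        hmη, smul_smul, ENNReal.inv_mul_cancel hm0 hmfin, one_smul]
      exact hμ₁
    have hsnd : ν.map Prod.snd = μ₂ := by
      have h : (Prod.snd ∘ fun x : E => (x, x)) = id := rfl
      rw [hν, Measure.map_add _ _ measurable_snd, Measure.map_smul,
        Measure.map_snd_prod, Measure.map_map measurable_snd hdiagmeas, h, Measure.map_id,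
        ← hm, smul_smul, ENNReal.inv_mul_cancel hm0 hmfin, one_smul]
      exact hμ₂
    have hprob : IsProbabilityMeasure ν := by
      constructor
      have : ν.map Prod.fst univ = ν univ := by
        rw [Measure.map_apply measurable_fst MeasurableSet.univ, preimage_univ]
      rw [← this, hfst, measure_univ]
    refine ⟨ν, hprob, hfst, hsnd, ?_⟩
    intro V hV
    have hVV : Measurable fun q : E × E => V q.1 + V q.2 := by fun_prop
    rw [hν, lintegral_add_measure, hdiag_int lam V hV, zero_add, lintegral_smul_measure]
    -- off-diagonal a.e.
    have hdiag0 : (ξ.prod η) (Set.diagonal E) = 0 := by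
      have hsub : Set.diagonal E ⊆ (A ×ˢ A) ∪ (Aᶜ ×ˢ Aᶜ) := by
        rintro ⟨x, y⟩ hxy
        simp only [Set.mem_diagonal_iff] at hxy
        subst hxy
        by_cases hx : x ∈ A
        · exact Or.inl ⟨hx, hx⟩
        · exact Or.inr ⟨hx, hx⟩
      refine measure_mono_null hsub ?_
      refine le_antisymm ((measure_union_le _ _).trans ?_) (zero_le)
      rw [Measure.prod_prod, Measure.prod_prod, hηA, hξAc]
      simp
    have hae : (fun p : E × E => {q : E × E | q.1 ≠ q.2}.indicator
        (fun q => V q.1 + V q.2) p) =ᵐ[ξ.prod η] (fun p => V p.1 + V p.2) := by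
      refine Filter.eventuallyEq_iff_exists_mem.2 ⟨{q : E × E | q.1 ≠ q.2}, ?_, ?_⟩
      · rw [mem_ae_iff]
        refine measure_mono_null (fun p hp => ?_) hdiag0
        simp only [mem_compl_iff, mem_setOf_eq, not_not] at hp
        exact hp
      · intro p hp
        exact indicator_of_mem hp _
    rw [lintegral_congr_ae hae]
    have hsplit : ∫⁻ p, (V p.1 + V p.2) ∂(ξ.prod η)
        = m * ∫⁻ x, V x ∂ξ + m * ∫⁻ x, V x ∂η := by
      rw [lintegral_add_left (show Measurable fun p : E × E => V p.1 from hV.comp measurable_fst)]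
      congr 1
      · rw [← lintegral_map hV measurable_fst, Measure.map_fst_prod, hmη,
          lintegral_smul_measure, smul_eq_mul]
      · rw [← lintegral_map hV measurable_snd, Measure.map_snd_prod, ← hm,
          lintegral_smul_measure, smul_eq_mul]
    rw [hsplit, ← mul_add, smul_eq_mul, ← mul_assoc, ENNReal.inv_mul_cancel hm0 hmfin, one_mul,
      hTV, lintegral_add_measure]
end

section
/- Let ρ > 0, η ∈ [0,1), M ≥ 0, and let f : [0,∞) → [0,∞) be continuous and satisfy, for all t ≥ 0, f(t) ≤ e^{−ρt} f(0) + ρ ∫₀^t e^{ρ(s−t)} (η f(s) + M) ds. Then for all t ≥ 0, f(t) ≤ e^{−ρ(1−η)t} f(0) + (1 − e^{−ρ(1−η)t}) · M/(1−η). -/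
open intervalIntegral Real

lemma hasDerivAt_exp_mul' (k x : ℝ) :
    HasDerivAt (fun s => Real.exp (k * s)) (k * Real.exp (k * x)) x := by
  have h := ((hasDerivAt_id x).const_mul k).exp
  simp only [mul_one, id_eq] at h
  rw [mul_comm]
  exact h

lemma cont_exp_mul (k : ℝ) : Continuous (fun s : ℝ => Real.exp (k * s)) :=
  Real.continuous_exp.comp (continuous_const.mul continuous_id)

/-- ∫₀^t e^{k s} ds = (e^{kt} - 1)/k for k ≠ 0. -/
lemma integral_exp_mul' (k t : ℝ) (hk : k ≠ 0) :
    ∫ s in (0:ℝ)..t, Real.exp (k * s) = (Real.exp (k * t) - 1) / k := by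
  have h : ∀ x ∈ Set.uIcc (0:ℝ) t, HasDerivAt (fun s => Real.exp (k * s) / k)
      (Real.exp (k * x)) x := by
    intro x _
    have := (hasDerivAt_exp_mul' k x).div_const k
    simpa [mul_div_assoc, mul_div_cancel_left₀ _ hk] using this
  have := intervalIntegral.integral_eq_sub_of_hasDerivAt h
    ((cont_exp_mul k).intervalIntegrable _ _)
  rw [this]
  simp [sub_div]

/-- ∫₀^t k e^{-k s} ds = 1 - e^{-kt} for all k (including k = 0). -/
lemma integral_k_exp_neg (k t : ℝ) :
    ∫ s in (0:ℝ)..t, k * Real.exp (-k * s) = 1 - Real.exp (-k * t) := by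
  have h : ∀ x ∈ Set.uIcc (0:ℝ) t, HasDerivAt (fun s => -Real.exp (-k * s))
      (k * Real.exp (-k * x)) x := by
    intro x _
    have : HasDerivAt (fun s => -Real.exp (-k * s)) (-(-k * Real.exp (-k * x))) x :=
      (hasDerivAt_exp_mul' (-k) x).neg
    convert this using 1
    ring
  have := intervalIntegral.integral_eq_sub_of_hasDerivAt h
    ((continuous_const.mul (cont_exp_mul (-k))).intervalIntegrable _ _)
  rw [this]; simp; ring

/-- Gronwall-type estimate: if a nonnegative continuous `f` on `[0,∞)` satisfies
`f t ≤ e^{-ρt} f 0 + ρ ∫₀^t e^{ρ(s-t)} (η f s + M) ds` for all `t ≥ 0`, with `ρ > 0`,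
`η ∈ [0,1)` and `M ≥ 0`, then
`f t ≤ e^{-ρ(1-η)t} f 0 + (1 - e^{-ρ(1-η)t}) M/(1-η)` for all `t ≥ 0`. -/
theorem gronwall_lyapunov (ρ η M : ℝ) (hρ : 0 < ρ) (hη0 : 0 ≤ η) (hη1 : η < 1) (hM : 0 ≤ M)
    (f : ℝ → ℝ) (hfc : ContinuousOn f (Set.Ici 0)) (hf0 : ∀ t ≥ (0:ℝ), 0 ≤ f t)
    (hineq : ∀ t ≥ (0:ℝ),
      f t ≤ Real.exp (-ρ * t) * f 0 +
        ρ * ∫ s in (0:ℝ)..t, Real.exp (ρ * (s - t)) * (η * f s + M)) :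
    ∀ t ≥ (0:ℝ),
      f t ≤ Real.exp (-ρ * (1 - η) * t) * f 0 +
        (1 - Real.exp (-ρ * (1 - η) * t)) * (M / (1 - η)) := by
  intro t ht
  -- extended f, continuous on all of ℝ
  set φ : ℝ → ℝ := fun s => f (max s 0) with hφdef
  have hφc : Continuous φ :=
    hfc.comp_continuous (continuous_id.max continuous_const) (fun x => Set.mem_Ici.2 (le_max_right _ _))
  have hφeq : ∀ s ≥ (0:ℝ), φ s = f s := fun s hs => by simp [hφdef, max_eq_left hs]
  have hφ0 : φ 0 = f 0 := hφeq 0 le_rfl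
  set c : ℝ := ρ * η with hc
  have hc0 : 0 ≤ c := mul_nonneg hρ.le hη0
  have hρc : 0 < ρ - c := by
    have : ρ - c = ρ * (1 - η) := by ring
    rw [this]; exact mul_pos hρ (by linarith)
  set ψ : ℝ → ℝ := fun s => η * φ s + M with hψdef
  have hψc : Continuous ψ := (continuous_const.mul hφc).add continuous_const
  set g : ℝ → ℝ := fun s => Real.exp (ρ * s) * ψ s with hgdef
  have hgc : Continuous g := (cont_exp_mul ρ).mul hψc
  set h : ℝ → ℝ := fun r => ∫ s in (0:ℝ)..r, g s with hhdef
  have hhd : ∀ r, HasDerivAt h (g r) r := fun r =>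
    intervalIntegral.integral_hasDerivAt_right (hgc.intervalIntegrable _ _)
      hgc.aestronglyMeasurable.stronglyMeasurableAtFilter hgc.continuousAt
  set a : ℝ → ℝ := fun r => η * f 0 + M * Real.exp (ρ * r) with hadef
  have hac : Continuous a := continuous_const.add (continuous_const.mul (cont_exp_mul ρ))
  -- key pointwise bound: g r ≤ c * h r + a r for r ≥ 0
  have hkey : ∀ r ≥ (0:ℝ), g r ≤ c * h r + a r := by
    intro r hr
    have h1 := hineq r hr
    have hcongr : (∫ s in (0:ℝ)..r, Real.exp (ρ * (s - r)) * (η * f s + M))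
        = Real.exp (-ρ * r) * h r := by
      rw [hhdef, ← intervalIntegral.integral_const_mul]
      apply intervalIntegral.integral_congr
      intro s hs
      rw [Set.uIcc_of_le hr] at hs
      rw [hgdef]
      simp only
      rw [hψdef]
      simp only
      rw [hφeq s hs.1, ← mul_assoc, ← Real.exp_add]
      ring_nf
    rw [hcongr] at h1
    have h2 : φ r = f r := hφeq r hr
    have h3 : g r = Real.exp (ρ * r) * (η * f r + M) := by
      rw [hgdef]; simp only; rw [hψdef]; simp only [h2]
    rw [h3]
    have hexp : (0:ℝ) < Real.exp (ρ * r) := Real.exp_pos _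
    calc Real.exp (ρ * r) * (η * f r + M)
        ≤ Real.exp (ρ * r) * (η * (Real.exp (-ρ * r) * f 0
            + ρ * (Real.exp (-ρ * r) * h r)) + M) := by
          apply mul_le_mul_of_nonneg_left _ hexp.le
          have := mul_le_mul_of_nonneg_left h1 hη0
          linarith
      _ = c * h r + a r := by
          rw [hadef]; simp only
          rw [show Real.exp (ρ * r) * (η * (Real.exp (-ρ * r) * f 0
            + ρ * (Real.exp (-ρ * r) * h r)) + M)
            = (Real.exp (ρ * r) * Real.exp (-ρ * r)) * (η * f 0 + ρ * η * h r)
              + M * Real.exp (ρ * r) by ring]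
          rw [← Real.exp_add]
          simp [hc]; ring
  -- W r := e^{-cr} h r - ∫₀^r e^{-cs} a s
  set W : ℝ → ℝ := fun r => Real.exp (-c * r) * h r
      - ∫ s in (0:ℝ)..r, Real.exp (-c * s) * a s with hWdef
  have haec : Continuous fun s => Real.exp (-c * s) * a s := (cont_exp_mul (-c)).mul hac
  have hWd : ∀ r, HasDerivAt W
      (Real.exp (-c * r) * g r + (-c) * Real.exp (-c * r) * h r
        - Real.exp (-c * r) * a r) r := by
    intro r
    have hexp := hasDerivAt_exp_mul' (-c) r
    have h1 : HasDerivAt (fun r => Real.exp (-c * r) * h r)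
        ((-c) * Real.exp (-c * r) * h r + Real.exp (-c * r) * g r) r := by
      exact hexp.mul (hhd r)
    have h2 : HasDerivAt (fun r => ∫ s in (0:ℝ)..r, Real.exp (-c * s) * a s)
        (Real.exp (-c * r) * a r) r :=
      intervalIntegral.integral_hasDerivAt_right (haec.intervalIntegrable _ _)
        haec.aestronglyMeasurable.stronglyMeasurableAtFilter haec.continuousAt
    have : HasDerivAt (fun r => Real.exp (-c * r) * h r - ∫ s in (0:ℝ)..r, Real.exp (-c * s) * a s)
        ((-c) * Real.exp (-c * r) * h r + Real.exp (-c * r) * g r - Real.exp (-c * r) * a r) r :=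
      h1.sub h2
    convert this using 1
    ring
  have hW0 : W 0 = 0 := by simp [hWdef, hhdef]
  have hWt : W t ≤ 0 := by
    have hanti : AntitoneOn W (Set.Icc 0 t) := by
      apply antitoneOn_of_deriv_nonpos (convex_Icc 0 t)
      · exact fun x _ => ((hWd x).differentiableAt).continuousAt.continuousWithinAt
      · exact fun x _ => ((hWd x).differentiableAt).differentiableWithinAt
      · intro x hx
        rw [interior_Icc] at hx
        rw [(hWd x).deriv]
        have := hkey x hx.1.le
        have hexp : (0:ℝ) < Real.exp (-c * x) := Real.exp_pos _
        nlinarith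
    calc W t ≤ W 0 := hanti (Set.left_mem_Icc.2 ht) (Set.mem_Icc.2 ⟨ht, le_rfl⟩) ht
      _ = 0 := hW0
  have hht : h t ≤ Real.exp (c * t) * ∫ s in (0:ℝ)..t, Real.exp (-c * s) * a s := by
    have : Real.exp (-c * t) * h t ≤ ∫ s in (0:ℝ)..t, Real.exp (-c * s) * a s := by
      have := hWt; rw [hWdef] at this; simp only at this; linarith
    calc h t = Real.exp (c * t) * (Real.exp (-c * t) * h t) := by
          rw [← mul_assoc, ← Real.exp_add]; simp
      _ ≤ _ := by apply mul_le_mul_of_nonneg_left this (Real.exp_pos _).le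
  -- compute the integral
  have hI : (∫ s in (0:ℝ)..t, Real.exp (-c * s) * a s)
      = f 0 / ρ * (1 - Real.exp (-c * t)) + M * ((Real.exp ((ρ - c) * t) - 1) / (ρ - c)) := by
    have hsplit : (∫ s in (0:ℝ)..t, Real.exp (-c * s) * a s)
        = (f 0 / ρ) * (∫ s in (0:ℝ)..t, c * Real.exp (-c * s))
          + M * ∫ s in (0:ℝ)..t, Real.exp ((ρ - c) * s) := by
      rw [← intervalIntegral.integral_const_mul, ← intervalIntegral.integral_const_mul,
        ← intervalIntegral.integral_add]
      · apply intervalIntegral.integral_congr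
        intro s _
        rw [hadef]
        simp only
        rw [show (ρ - c) * s = ρ * s + -c * s by ring, Real.exp_add]
        have : f 0 / ρ * (c * Real.exp (-c * s)) = η * f 0 * Real.exp (-c * s) := by
          field_simp [hc]; ring
        rw [this]; ring
      · exact (continuous_const.mul (continuous_const.mul (cont_exp_mul (-c)))).intervalIntegrable _ _
      · exact (continuous_const.mul (cont_exp_mul (ρ - c))).intervalIntegrable _ _
    rw [hsplit, integral_k_exp_neg, integral_exp_mul' _ _ (ne_of_gt hρc)]
  -- conclude
  have hmain := hineq t ht
  have hcongr : (∫ s in (0:ℝ)..t, Real.exp (ρ * (s - t)) * (η * f s + M))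
      = Real.exp (-ρ * t) * h t := by
    rw [hhdef, ← intervalIntegral.integral_const_mul]
    apply intervalIntegral.integral_congr
    intro s hs
    rw [Set.uIcc_of_le ht] at hs
    rw [hgdef]; simp only; rw [hψdef]; simp only
    rw [hφeq s hs.1, ← mul_assoc, ← Real.exp_add]
    ring_nf
  rw [hcongr] at hmain
  have hfinal : f t ≤ Real.exp (-ρ * t) * f 0
      + ρ * (Real.exp (-ρ * t) * (Real.exp (c * t)
        * (f 0 / ρ * (1 - Real.exp (-c * t)) + M * ((Real.exp ((ρ - c) * t) - 1) / (ρ - c))))) := by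
    refine hmain.trans ?_
    have : h t ≤ Real.exp (c * t)
        * (f 0 / ρ * (1 - Real.exp (-c * t)) + M * ((Real.exp ((ρ - c) * t) - 1) / (ρ - c))) := by
      rw [← hI]; exact hht
    have h2 := mul_le_mul_of_nonneg_left this (Real.exp_pos (-ρ * t)).le
    nlinarith [mul_le_mul_of_nonneg_left h2 hρ.le]
  refine hfinal.trans (le_of_eq ?_)
  have e4 : Real.exp (-ρ * (1 - η) * t) = Real.exp ((c - ρ) * t) := by
    congr 1; rw [hc]; ring
  rw [e4]
  set E := Real.exp ((c - ρ) * t) with hE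
  set A := Real.exp (-c * t) with hA
  set B := Real.exp ((ρ - c) * t) with hB
  set R := Real.exp (-ρ * t) with hR
  have e2 : E * A = R := by
    rw [hE, hA, hR, ← Real.exp_add]; ring_nf
  have e3 : E * B = 1 := by
    rw [hE, hB, ← Real.exp_add, show (c - ρ) * t + (ρ - c) * t = 0 by ring, Real.exp_zero]
  have e1 : R * Real.exp (c * t) = E := by
    rw [hE, hR, ← Real.exp_add]; ring_nf
  have hρn : ρ ≠ 0 := ne_of_gt hρ
  have hρcn : ρ - c ≠ 0 := ne_of_gt hρc
  have h1η : (1:ℝ) - η ≠ 0 := by linarith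
  have hMeq : M / (1 - η) = M * ρ / (ρ - c) := by
    rw [hc]; field_simp
  rw [hMeq]
  rw [show ρ * (R * (Real.exp (c * t) * (f 0 / ρ * (1 - A) + M * ((B - 1) / (ρ - c)))))
    = ρ * ((R * Real.exp (c * t)) * (f 0 / ρ * (1 - A) + M * ((B - 1) / (ρ - c)))) by ring, e1]
  have expand : ρ * (E * (f 0 / ρ * (1 - A) + M * ((B - 1) / (ρ - c))))
      = (E * A) * (-f 0) + E * f 0 + ((E * B) - E) * (M * ρ / (ρ - c)) := by
    field_simp; ring
  rw [expand, e2, e3]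
  ring
end

section
/- Let ρ > 0, η ∈ [0,1), M ≥ 0, N ≥ 1 an integer, and let f₁, …, f_N : [0,∞) → [0,∞) be continuous functions such that for each i and all t ≥ 0, f_i(t) ≤ e^{−ρt} f_i(0) + ρ ∫₀^t e^{ρ(s−t)} ((η/N) Σ_{j=1}^N f_j(s) + M) ds. Then for all t ≥ 0, Σ_{i=1}^N f_i(t) ≤ e^{−ρ(1−η)t} Σ_{i=1}^N f_i(0) + (1 − e^{−ρ(1−η)t}) · N M/(1−η). -/
open Finset

/-- Gronwall-type estimate for a system: if nonnegative continuous `f₁, …, f_N` on `[0,∞)`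
satisfy `f_i t ≤ e^{-ρt} f_i 0 + ρ ∫₀^t e^{ρ(s-t)} ((η/N) ∑_j f_j s + M) ds` for all `i` and
`t ≥ 0`, with `ρ > 0`, `η ∈ [0,1)` and `M ≥ 0`, then
`∑_i f_i t ≤ e^{-ρ(1-η)t} ∑_i f_i 0 + (1 - e^{-ρ(1-η)t}) N M/(1-η)` for all `t ≥ 0`. -/
theorem gronwall_lyapunov_system (ρ η M : ℝ) (hρ : 0 < ρ) (hη0 : 0 ≤ η) (hη1 : η < 1)
    (hM : 0 ≤ M) (N : ℕ) (hN : 1 ≤ N) (f : Fin N → ℝ → ℝ)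
    (hfc : ∀ i, ContinuousOn (f i) (Set.Ici 0))
    (hf0 : ∀ i, ∀ t ≥ (0:ℝ), 0 ≤ f i t)
    (hineq : ∀ i, ∀ t ≥ (0:ℝ),
      f i t ≤ Real.exp (-ρ * t) * f i 0 +
        ρ * ∫ s in (0:ℝ)..t, Real.exp (ρ * (s - t)) * ((η / N) * ∑ j, f j s + M)) :
    ∀ t ≥ (0:ℝ),
      ∑ i, f i t ≤ Real.exp (-ρ * (1 - η) * t) * ∑ i, f i 0 +
        (1 - Real.exp (-ρ * (1 - η) * t)) * (N * M / (1 - η)) := by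
  have hNR : (0:ℝ) < (N:ℝ) := by exact_mod_cast Nat.lt_of_lt_of_le Nat.zero_lt_one hN
  have hNne : (N:ℝ) ≠ 0 := ne_of_gt hNR
  have h1η : (0:ℝ) < 1 - η := by linarith
  set F : ℝ → ℝ := fun s => ∑ i, f i s with hFdef
  set Ft : ℝ → ℝ := fun s => ∑ i, f i (max s 0) with hFtdef
  have hFtc : Continuous Ft := by
    apply continuous_finset_sum
    intro i _
    exact (hfc i).comp_continuous (continuous_id.max continuous_const)
      (fun x => Set.mem_Ici.mpr (le_max_right _ _))
  have hFteq : ∀ s, 0 ≤ s → Ft s = F s := by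
    intro s hs
    simp only [hFtdef, hFdef, max_eq_left hs]
  set g : ℝ → ℝ := fun s => ρ * (Real.exp (ρ * s) * (η * Ft s + N * M)) with hgdef
  have hgc : Continuous g := by
    fun_prop
  set H : ℝ → ℝ := fun t => F 0 + ∫ s in (0:ℝ)..t, g s with hHdef
  have hHderiv : ∀ x : ℝ, HasDerivAt H (g x) x := by
    intro x
    have : HasDerivAt (fun t => ∫ s in (0:ℝ)..t, g s) (g x) x :=
      intervalIntegral.integral_hasDerivAt_right (hgc.intervalIntegrable 0 x)
        (hgc.stronglyMeasurable.stronglyMeasurableAtFilter) hgc.continuousAt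
    simpa [hHdef] using this.const_add (F 0)
  -- key summed inequality
  have hkey : ∀ t, 0 ≤ t → F t ≤ Real.exp (-ρ * t) * H t := by
    intro t ht
    have hsum := Finset.sum_le_sum (fun i (_ : i ∈ univ) => hineq i t ht)
    rw [Finset.sum_add_distrib, ← Finset.mul_sum, Finset.sum_const, Finset.card_univ,
      Fintype.card_fin, nsmul_eq_mul] at hsum
    have h2 : (N:ℝ) * (ρ * ∫ s in (0:ℝ)..t, Real.exp (ρ * (s - t)) * ((η / N) * F s + M))
        = Real.exp (-ρ * t) * ∫ s in (0:ℝ)..t, g s := by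
      rw [← intervalIntegral.integral_const_mul, ← intervalIntegral.integral_const_mul,
        ← intervalIntegral.integral_const_mul]
      apply intervalIntegral.integral_congr
      intro s hs
      rw [Set.uIcc_of_le ht] at hs
      have hFs : Ft s = F s := hFteq s hs.1
      have hexp : Real.exp (ρ * (s - t)) = Real.exp (ρ * s) * Real.exp (-ρ * t) := by
        rw [← Real.exp_add]; ring_nf
      simp only [hgdef, hFs, hexp]
      field_simp
    calc F t ≤ Real.exp (-ρ * t) * F 0 +
        (N:ℝ) * (ρ * ∫ s in (0:ℝ)..t, Real.exp (ρ * (s - t)) * ((η / N) * F s + M)) := hsum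
      _ = Real.exp (-ρ * t) * H t := by rw [h2, hHdef]; ring
  set K : ℝ := N * M / (1 - η) with hKdef
  set W : ℝ → ℝ := fun x => Real.exp (-(ρ * η) * x) * H x - K * Real.exp ((ρ * (1 - η)) * x)
    with hWdef
  have hW' : ∀ x : ℝ, HasDerivAt W
      (Real.exp (-(ρ * η) * x) * g x - (ρ * η) * (Real.exp (-(ρ * η) * x) * H x)
        - K * ((ρ * (1 - η)) * Real.exp ((ρ * (1 - η)) * x))) x := by
    intro x
    have e1 : HasDerivAt (fun y => Real.exp (-(ρ * η) * y))
        (Real.exp (-(ρ * η) * x) * (-(ρ * η))) x := by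
      simpa using ((hasDerivAt_id x).const_mul (-(ρ * η))).exp
    have e2 := e1.mul (hHderiv x)
    have e3 : HasDerivAt (fun y => K * Real.exp ((ρ * (1 - η)) * y))
        (K * (Real.exp ((ρ * (1 - η)) * x) * (ρ * (1 - η)))) x := by
      simpa using (((hasDerivAt_id x).const_mul (ρ * (1 - η))).exp).const_mul K
    have := e2.sub e3
    exact this.congr_deriv (by ring)
  have hWanti : AntitoneOn W (Set.Ici 0) := by
    apply antitoneOn_of_deriv_nonpos (convex_Ici 0)
    · exact (Continuous.continuousOn (by
        have : Differentiable ℝ W := fun x => (hW' x).differentiableAt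
        exact this.continuous))
    · intro x hx
      exact (hW' x).differentiableAt.differentiableWithinAt
    · intro x hx
      rw [interior_Ici] at hx
      have hx0 : (0:ℝ) ≤ x := le_of_lt hx
      rw [(hW' x).deriv]
      have hFx : Real.exp (ρ * x) * F x ≤ H x := by
        have h := mul_le_mul_of_nonneg_left (hkey x hx0) (Real.exp_pos (ρ * x)).le
        have : Real.exp (ρ * x) * (Real.exp (-ρ * x) * H x) = H x := by
          rw [← mul_assoc, ← Real.exp_add]; ring_nf; rw [Real.exp_zero, one_mul]
        linarith [h.trans_eq this]
      have hE : Real.exp (-(ρ * η) * x) * Real.exp (ρ * x) = Real.exp ((ρ * (1 - η)) * x) := by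
        rw [← Real.exp_add]; ring_nf
      have hK : K * (ρ * (1 - η)) = ρ * (↑N * M) := by
        rw [hKdef]; field_simp
      have hgx : g x = ρ * η * (Real.exp (ρ * x) * F x) + ρ * (↑N * M) * Real.exp (ρ * x) := by
        simp only [hgdef, hFteq x hx0]; ring
      have hEpos := Real.exp_pos (-(ρ * η) * x)
      have hre : Real.exp (-(ρ * η) * x) * g x - ρ * η * (Real.exp (-(ρ * η) * x) * H x)
          - K * (ρ * (1 - η) * Real.exp (ρ * (1 - η) * x))
          = ρ * η * Real.exp (-(ρ * η) * x) * (Real.exp (ρ * x) * F x - H x)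
            + ρ * (↑N * M) * (Real.exp (-(ρ * η) * x) * Real.exp (ρ * x))
            - K * (ρ * (1 - η)) * Real.exp (ρ * (1 - η) * x) := by
        rw [hgx]; ring
      rw [hre, hE, hK]
      have hle : ρ * η * Real.exp (-(ρ * η) * x) * (Real.exp (ρ * x) * F x - H x) ≤ 0 :=
        mul_nonpos_of_nonneg_of_nonpos (by positivity) (by linarith)
      linarith
  intro t ht
  have hWle : W t ≤ W 0 := hWanti (Set.self_mem_Ici) ht ht
  have hW0 : W 0 = F 0 - K := by
    simp [hWdef, hHdef]
  have hiden1 : Real.exp (-(ρ * (1 - η)) * t) * (Real.exp (-(ρ * η) * t) * H t)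
      = Real.exp (-ρ * t) * H t := by
    rw [← mul_assoc, ← Real.exp_add]; ring_nf
  have hiden2 : Real.exp (-(ρ * (1 - η)) * t) * Real.exp ((ρ * (1 - η)) * t) = 1 := by
    rw [← Real.exp_add]
    have : -(ρ * (1 - η)) * t + (ρ * (1 - η)) * t = 0 := by ring
    rw [this, Real.exp_zero]
  have hbpos := Real.exp_pos (-(ρ * (1 - η)) * t)
  have h2 : Real.exp (-(ρ * η) * t) * H t ≤ F 0 - K + K * Real.exp ((ρ * (1 - η)) * t) := by
    have h3 := hWle
    rw [hW0] at h3
    simp only [hWdef] at h3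
    linarith
  have hb := mul_le_mul_of_nonneg_left h2 hbpos.le
  have hkeyt := hkey t ht
  have hfinal : Real.exp (-(ρ * (1 - η)) * t) * (F 0 - K + K * Real.exp ((ρ * (1 - η)) * t))
      = Real.exp (-(ρ * (1 - η)) * t) * F 0 + (1 - Real.exp (-(ρ * (1 - η)) * t)) * K := by
    have h4 : Real.exp (-(ρ * (1 - η)) * t) * (F 0 - K + K * Real.exp ((ρ * (1 - η)) * t))
        = Real.exp (-(ρ * (1 - η)) * t) * F 0 - Real.exp (-(ρ * (1 - η)) * t) * K
          + K * (Real.exp (-(ρ * (1 - η)) * t) * Real.exp ((ρ * (1 - η)) * t)) := by ring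
    rw [h4, hiden2]; ring
  have hexp_eq : Real.exp (-ρ * (1 - η) * t) = Real.exp (-(ρ * (1 - η)) * t) := by ring_nf
  rw [hexp_eq]
  linarith [hb, hkeyt, hiden1, hfinal]
end

section
/- Let ρ > 0, η ∈ (0,1), M ≥ 0, N ≥ 1 an integer, and let f₁, …, f_N : [0,∞) → [0,∞) be continuous functions such that, writing F = Σ_{j=1}^N f_j, for each i and all s, t ≥ 0, f_i(s+t) ≤ e^{−ρt} f_i(s) + ρ ∫₀^t e^{ρ(u−t)} ((η/N) F(s+u) + M) du. Define g_i(t) = f_i(t) + (2η/(N(1−η))) F(t). Then for each i and all t ≥ 0, g_i(t) ≤ e^{−ρ(1−η)t/2} g_i(0) + (2(1+η)M/(1−η)²) (1 − e^{−ρ(1−η)t/2}). -/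
open Finset

lemma integral_exp_mul_aux (c T : ℝ) (hc : c ≠ 0) :
    ∫ u in (0:ℝ)..T, Real.exp (c * u) = (Real.exp (c * T) - 1) / c := by
  have h : ∀ u ∈ Set.uIcc (0:ℝ) T,
      HasDerivAt (fun x => Real.exp (c * x) / c) (Real.exp (c * u)) u := by
    intro u _
    have h1 : HasDerivAt (fun x : ℝ => c * x) c u := by
      simpa using (hasDerivAt_id u).const_mul c
    have h2 := (Real.hasDerivAt_exp (c * u)).comp u h1
    have h3 := h2.div_const c
    simpa [mul_div_cancel_right₀, hc, mul_comm, mul_div_assoc] using h3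
  rw [intervalIntegral.integral_eq_sub_of_hasDerivAt h
    ((Real.continuous_exp.comp (continuous_const.mul continuous_id)).continuousOn.intervalIntegrable)]
  simp
  ring

lemma cont_induction_aux (g ψ : ℝ → ℝ) (hg : ContinuousOn g (Set.Ici 0))
    (hψ : Continuous ψ)
    (hstep : ∀ T ≥ (0:ℝ), (∀ u ∈ Set.Ico (0:ℝ) T, g u ≤ ψ u) → g T < ψ T) :
    ∀ t ≥ (0:ℝ), g t < ψ t := by
  by_contra hc
  push_neg at hc
  obtain ⟨t₀, ht₀, hle⟩ := hc
  set A : Set ℝ := Set.Ici 0 ∩ (fun t => g t - ψ t) ⁻¹' Set.Ici 0 with hA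
  have hclosed : IsClosed A :=
    (hg.sub hψ.continuousOn).preimage_isClosed_of_isClosed isClosed_Ici isClosed_Ici
  have hne : A.Nonempty := ⟨t₀, ht₀, by simpa using hle⟩
  have hbdd : BddBelow A := ⟨0, fun x hx => hx.1⟩
  have hTmem : sInf A ∈ A := hclosed.csInf_mem hne hbdd
  set T := sInf A
  have hT0 : (0:ℝ) ≤ T := hTmem.1
  have hTle : ψ T ≤ g T := by have := hTmem.2; simp at this; linarith
  have hbelow : ∀ u ∈ Set.Ico (0:ℝ) T, g u ≤ ψ u := by
    intro u hu
    by_contra hgu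
    push_neg at hgu
    have : u ∈ A := ⟨hu.1, by simp; linarith⟩
    have := csInf_le hbdd this
    exact absurd hu.2 (not_lt.mpr this)
  exact absurd (hstep T hT0 hbelow) (not_lt.mpr hTle)

set_option maxHeartbeats 1000000 in
/-- Weighted Lyapunov decay for a system: if nonnegative continuous `f₁, …, f_N` on `[0,∞)`
satisfy, with `F = ∑_j f_j`,
`f_i (s+t) ≤ e^{-ρt} f_i s + ρ ∫₀^t e^{ρ(u-t)} ((η/N) F (s+u) + M) du` for all `i` and
`s, t ≥ 0`, where `ρ > 0`, `η ∈ (0,1)` and `M ≥ 0`, then, setting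
`g_i t = f_i t + (2η/(N(1-η))) F t`, one has
`g_i t ≤ e^{-ρ(1-η)t/2} g_i 0 + (2(1+η)M/(1-η)²)(1 - e^{-ρ(1-η)t/2})` for all `i`, `t ≥ 0`. -/
theorem gronwall_weighted_lyapunov_system (ρ η M : ℝ) (hρ : 0 < ρ) (hη0 : 0 < η) (hη1 : η < 1)
    (hM : 0 ≤ M) (N : ℕ) (hN : 1 ≤ N) (f : Fin N → ℝ → ℝ)
    (hfc : ∀ i, ContinuousOn (f i) (Set.Ici 0))
    (hf0 : ∀ i, ∀ t ≥ (0:ℝ), 0 ≤ f i t)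
    (hineq : ∀ i, ∀ s ≥ (0:ℝ), ∀ t ≥ (0:ℝ),
      f i (s + t) ≤ Real.exp (-ρ * t) * f i s +
        ρ * ∫ u in (0:ℝ)..t, Real.exp (ρ * (u - t)) * ((η / N) * (∑ j, f j (s + u)) + M)) :
    ∀ i, ∀ t ≥ (0:ℝ),
      f i t + (2 * η / (N * (1 - η))) * ∑ j, f j t ≤
        Real.exp (-(ρ * (1 - η)) * t / 2) *
            (f i 0 + (2 * η / (N * (1 - η))) * ∑ j, f j 0) +
          (2 * (1 + η) * M / (1 - η) ^ 2) * (1 - Real.exp (-(ρ * (1 - η)) * t / 2)) := by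
  intro i t ht
  have hNpos : (0:ℝ) < N := by exact_mod_cast Nat.lt_of_lt_of_le Nat.zero_lt_one hN
  have h1η : (0:ℝ) < 1 - η := by linarith
  set F : ℝ → ℝ := fun s => ∑ j, f j s with hF
  set c : ℝ := 2 * η / (N * (1 - η)) with hcdef
  set β : ℝ := (1 + η) / 2 with hβdef
  set B : ℝ := (1 + η) * M / (1 - η) with hBdef
  set K : ℝ := 2 * (1 + η) * M / (1 - η) ^ 2 with hKdef
  set lam : ℝ := ρ * (1 - η) / 2 with hlamdef
  set g : ℝ → ℝ := fun s => f i s + c * F s with hgdef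
  have hc0 : 0 ≤ c := by
    apply div_nonneg (by linarith) (by positivity)
  have hcN : 1 + c * N = (1 + η) / (1 - η) := by
    rw [hcdef]
    field_simp [hNpos.ne', h1η.ne']
    ring
  have hβ0 : 0 < β := by rw [hβdef]; linarith
  have hβ1 : β < 1 := by rw [hβdef]; linarith
  have hKB : β * K + B = K := by
    rw [hβdef, hKdef, hBdef]
    field_simp
    ring
  have hρβ : ρ - lam = ρ * β := by rw [hlamdef, hβdef]; ring
  have hFc : ContinuousOn F (Set.Ici 0) := by
    apply continuousOn_finset_sum
    intro j _
    exact hfc j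
  have hgc : ContinuousOn g (Set.Ici 0) := (hfc i).add (continuousOn_const.mul hFc)
  -- master inequality
  have master : ∀ T ≥ (0:ℝ), g T ≤ Real.exp (-(ρ * T)) * g 0 +
      (1 + c * N) * (ρ * ∫ u in (0:ℝ)..T, Real.exp (ρ * (u - T)) * ((η / N) * F u + M)) := by
    intro T hT
    set I : ℝ := ρ * ∫ u in (0:ℝ)..T, Real.exp (ρ * (u - T)) * ((η / N) * F u + M) with hI
    have h1 : f i T ≤ Real.exp (-(ρ * T)) * f i 0 + I := by
      have := hineq i 0 le_rfl T hT
      simpa [zero_add, neg_mul, hF] using this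
    have h2 : F T ≤ Real.exp (-(ρ * T)) * F 0 + N * I := by
      have hsum : F T ≤ ∑ j : Fin N, (Real.exp (-(ρ * T)) * f j 0 + I) := by
        apply Finset.sum_le_sum
        intro j _
        have := hineq j 0 le_rfl T hT
        simpa [zero_add, neg_mul, hF] using this
      calc F T ≤ ∑ j : Fin N, (Real.exp (-(ρ * T)) * f j 0 + I) := hsum
        _ = Real.exp (-(ρ * T)) * F 0 + N * I := by
          rw [Finset.sum_add_distrib, ← Finset.mul_sum, Finset.sum_const, Finset.card_univ,
            Fintype.card_fin, nsmul_eq_mul]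
    have h2' := mul_le_mul_of_nonneg_left h2 hc0
    calc g T = f i T + c * F T := rfl
      _ ≤ (Real.exp (-(ρ * T)) * f i 0 + I) + c * (Real.exp (-(ρ * T)) * F 0 + N * I) :=
          add_le_add h1 h2'
      _ = Real.exp (-(ρ * T)) * g 0 + (1 + c * N) * I := by
          simp only [hgdef]; ring
  -- epsilon comparison
  have heps : ∀ ε > (0:ℝ), g t < Real.exp (-(lam * t)) * g 0 +
      K * (1 - Real.exp (-(lam * t))) + ε := by
    intro ε hε
    set ψ : ℝ → ℝ := fun s => Real.exp (-(lam * s)) * g 0 + K * (1 - Real.exp (-(lam * s))) + ε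
      with hψdef
    have hψc : Continuous ψ := by fun_prop
    have hstep : ∀ T ≥ (0:ℝ), (∀ u ∈ Set.Ico (0:ℝ) T, g u ≤ ψ u) → g T < ψ T := by
      intro T hT hbnd
      have hm := master T hT
      set A1 : ℝ := β * (g 0 - K) * Real.exp (-(ρ * T)) with hA1
      set A2 : ℝ := (β * (K + ε) + B) * Real.exp (-(ρ * T)) with hA2
      -- pointwise identity for the comparison integrand
      have hBfun : (fun u : ℝ => Real.exp (ρ * (u - T)) * (β * ψ u + B))
          = fun u : ℝ => A1 * Real.exp (ρ * β * u) + A2 * Real.exp (ρ * u) := by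
        funext u
        have e1 : Real.exp (ρ * (u - T)) = Real.exp (ρ * u) * Real.exp (-(ρ * T)) := by
          rw [← Real.exp_add]; ring_nf
        have e2 : Real.exp (ρ * β * u) = Real.exp (ρ * u) * Real.exp (-(lam * u)) := by
          rw [← Real.exp_add]; congr 1; rw [hβdef, hlamdef]; ring
        rw [hψdef, hA1, hA2, e1, e2]
        ring
      -- integrability
      have hIA : IntervalIntegrable
          (fun u => Real.exp (ρ * (u - T)) * ((η / N) * F u + M)) MeasureTheory.volume 0 T := by
        apply ContinuousOn.intervalIntegrable
        rw [Set.uIcc_of_le hT]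
        apply ContinuousOn.mul
        · exact (Real.continuous_exp.comp (by fun_prop)).continuousOn
        · exact (continuousOn_const.mul (hFc.mono (fun x hx => hx.1))).add continuousOn_const
      have hIB : IntervalIntegrable
          (fun u => Real.exp (ρ * (u - T)) * (β * ψ u + B)) MeasureTheory.volume 0 T := by
        apply Continuous.intervalIntegrable
        fun_prop
      -- a.e. pointwise bound
      have hae : (fun u => (1 + c * N) * (Real.exp (ρ * (u - T)) * ((η / N) * F u + M)))
          ≤ᵐ[MeasureTheory.volume.restrict (Set.Icc 0 T)]
          (fun u => Real.exp (ρ * (u - T)) * (β * ψ u + B)) := by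
        have hneT : ∀ᵐ u : ℝ ∂MeasureTheory.volume, u ≠ T := by
          rw [MeasureTheory.ae_iff]
          simpa using Real.volume_singleton
        filter_upwards [MeasureTheory.ae_restrict_mem measurableSet_Icc,
          MeasureTheory.ae_restrict_of_ae hneT] with u hu huT
        have huIco : u ∈ Set.Ico (0:ℝ) T := ⟨hu.1, lt_of_le_of_ne hu.2 huT⟩
        have hgu : g u ≤ ψ u := hbnd u huIco
        have hfiu : 0 ≤ f i u := hf0 i u hu.1
        have hcF : c * F u ≤ ψ u := by
          have : g u = f i u + c * F u := rfl
          linarith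
        have hkey : (1 + c * N) * ((η / N) * F u + M) ≤ β * ψ u + B := by
          have hid1 : (1 + c * N) * (η / N) = β * c := by
            rw [hcN, hβdef, hcdef]; field_simp
          have hid2 : (1 + c * N) * M = B := by rw [hcN, hBdef]; field_simp
          have h3 : β * (c * F u) ≤ β * ψ u := mul_le_mul_of_nonneg_left hcF hβ0.le
          have h4 : (1 + c * N) * ((η / N) * F u + M) = β * (c * F u) + B := by
            linear_combination F u * hid1 + hid2
          rw [h4]
          linarith
        have hexp : 0 < Real.exp (ρ * (u - T)) := Real.exp_pos _
        calc (1 + c * N) * (Real.exp (ρ * (u - T)) * ((η / N) * F u + M))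
            = Real.exp (ρ * (u - T)) * ((1 + c * N) * ((η / N) * F u + M)) := by ring
          _ ≤ Real.exp (ρ * (u - T)) * (β * ψ u + B) :=
              mul_le_mul_of_nonneg_left hkey hexp.le
      have hmono := intervalIntegral.integral_mono_ae_restrict hT (hIA.const_mul (1 + c * N))
        hIB hae
      rw [intervalIntegral.integral_const_mul] at hmono
      -- compute the comparison integral
      have hρβ0 : ρ * β ≠ 0 := by positivity
      have hBval : (∫ u in (0:ℝ)..T, Real.exp (ρ * (u - T)) * (β * ψ u + B))
          = A1 * ((Real.exp (ρ * β * T) - 1) / (ρ * β)) + A2 * ((Real.exp (ρ * T) - 1) / ρ) := by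
        have hI1 : IntervalIntegrable (fun u => A1 * Real.exp (ρ * β * u))
            MeasureTheory.volume 0 T :=
          (Continuous.intervalIntegrable (by fun_prop) 0 T)
        have hI2 : IntervalIntegrable (fun u => A2 * Real.exp (ρ * u))
            MeasureTheory.volume 0 T :=
          (Continuous.intervalIntegrable (by fun_prop) 0 T)
        rw [hBfun, intervalIntegral.integral_add hI1 hI2,
          intervalIntegral.integral_const_mul, intervalIntegral.integral_const_mul,
          integral_exp_mul_aux _ _ hρβ0, integral_exp_mul_aux _ _ (ne_of_gt hρ)]
      -- final numeric comparison
      set E : ℝ := Real.exp (-(ρ * T)) with hE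
      set D : ℝ := Real.exp (-(lam * T)) with hD
      have hXE : Real.exp (ρ * β * T) * E = D := by
        rw [hE, hD, ← Real.exp_add]; congr 1; rw [hβdef, hlamdef]; ring
      have hZE : Real.exp (ρ * T) * E = 1 := by
        rw [hE, ← Real.exp_add]; simp
      have hE0 : 0 < E := Real.exp_pos _
      have hx1 : ρ * (A1 * ((Real.exp (ρ * β * T) - 1) / (ρ * β)))
          = (g 0 - K) * (D - E) := by
        rw [hA1]
        have hd : (Real.exp (ρ * β * T) - 1) / (ρ * β) * (ρ * β)
            = Real.exp (ρ * β * T) - 1 := div_mul_cancel₀ _ hρβ0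
        linear_combination ((g 0 - K) * E) * hd + (g 0 - K) * hXE
      have hx2 : ρ * (A2 * ((Real.exp (ρ * T) - 1) / ρ)) = (K + β * ε) * (1 - E) := by
        rw [hA2]
        have hd2 : (Real.exp (ρ * T) - 1) / ρ * ρ = Real.exp (ρ * T) - 1 :=
          div_mul_cancel₀ _ (ne_of_gt hρ)
        linear_combination ((β * (K + ε) + B) * E) * hd2 + (β * (K + ε) + B) * hZE
          + (1 - E) * hKB
      have hfin : g T ≤ E * g 0 + (g 0 - K) * (D - E) + (K + β * ε) * (1 - E) := by
        set J1 : ℝ := ∫ u in (0:ℝ)..T, Real.exp (ρ * (u - T)) * ((η / N) * F u + M) with hJ1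
        set J2 : ℝ := ∫ u in (0:ℝ)..T, Real.exp (ρ * (u - T)) * (β * ψ u + B) with hJ2
        have h4 : ρ * ((1 + c * N) * J1) ≤ ρ * J2 := mul_le_mul_of_nonneg_left hmono hρ.le
        have hcomm : (1 + c * N) * (ρ * J1) = ρ * ((1 + c * N) * J1) := by ring
        have h5 : ρ * J2 = (g 0 - K) * (D - E) + (K + β * ε) * (1 - E) := by
          rw [hBval, mul_add, hx1, hx2]
        linarith
      have hψT : ψ T = D * g 0 + K * (1 - D) + ε := rfl
      rw [hψT]
      have hE1 : E ≤ 1 := by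
        rw [hE]; rw [Real.exp_le_one_iff]; nlinarith
      nlinarith [mul_pos hε (sub_pos.mpr hβ1), mul_nonneg (mul_nonneg hβ0.le hε.le) hE0.le]
    have hψ0 : g 0 < ψ 0 := by
      rw [hψdef]; simp; linarith
    have := cont_induction_aux g ψ hgc hψc (by
      intro T hT hb
      exact hstep T hT hb) t ht
    exact this
  -- let ε → 0
  have hle : g t ≤ Real.exp (-(lam * t)) * g 0 + K * (1 - Real.exp (-(lam * t))) := by
    apply le_of_forall_pos_le_add
    intro ε hε
    exact (heps ε hε).le
  have hexp_eq : Real.exp (-(ρ * (1 - η)) * t / 2) = Real.exp (-(lam * t)) := by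
    congr 1; rw [hlamdef]; ring
  rw [hexp_eq]
  exact hle
end

section
/- Let a, b : [0,∞) → ℝ be differentiable at 0 with a(0) = 1, b(0) = 0 and a'(0) < 0, and let F : [0,∞) → [0,∞) satisfy F(s+t) ≤ a(t) F(s) + b(t) for all s, t ≥ 0. Then for all t ≥ 0, F(t) ≤ e^{a'(0)t} F(0) + (b'(0)/(−a'(0))) (1 − e^{a'(0)t}). -/
open Filter Topology

/-- Iteration lemma: if `F : [0,∞) → [0,∞)` satisfies `F (s+t) ≤ a t * F s + b t` for all
`s, t ≥ 0`, where `a 0 = 1`, `b 0 = 0`, `a` and `b` are differentiable at `0` (from the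
right) with `a' 0 < 0`, then `F t ≤ e^{a'(0)t} F 0 + (b'(0)/(-a'(0)))(1 - e^{a'(0)t})`. -/
theorem iterate_contraction_decay (a b : ℝ → ℝ) (a' b' : ℝ)
    (ha : HasDerivWithinAt a a' (Set.Ici 0) 0) (hb : HasDerivWithinAt b b' (Set.Ici 0) 0)
    (ha0 : a 0 = 1) (hb0 : b 0 = 0) (ha' : a' < 0)
    (F : ℝ → ℝ) (hF0 : ∀ t ≥ (0:ℝ), 0 ≤ F t)
    (hFab : ∀ s ≥ (0:ℝ), ∀ t ≥ (0:ℝ), F (s + t) ≤ a t * F s + b t) :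
    ∀ t ≥ (0:ℝ),
      F t ≤ Real.exp (a' * t) * F 0 + (b' / (-a')) * (1 - Real.exp (a' * t)) := by
  intro t ht
  rcases eq_or_lt_of_le ht with rfl | ht
  · simp
  have hsub : Set.Ici (0:ℝ) \ {0} = Set.Ioi 0 := by
    ext x
    simp only [Set.mem_diff, Set.mem_Ici, Set.mem_singleton_iff, Set.mem_Ioi]
    constructor
    · rintro ⟨h1, h2⟩; exact lt_of_le_of_ne h1 (Ne.symm h2)
    · intro h; exact ⟨le_of_lt h, ne_of_gt h⟩
  -- slope limits
  have La : Tendsto (fun h => (a h - 1) / h) (𝓝[>] (0:ℝ)) (𝓝 a') := by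
    have h1 := hasDerivWithinAt_iff_tendsto_slope.mp ha
    rw [hsub] at h1
    refine h1.congr ?_
    intro x
    simp [slope_def_field, ha0]
  have Lb : Tendsto (fun h => b h / h) (𝓝[>] (0:ℝ)) (𝓝 b') := by
    have h1 := hasDerivWithinAt_iff_tendsto_slope.mp hb
    rw [hsub] at h1
    refine h1.congr ?_
    intro x
    simp [slope_def_field, hb0]
  have hlogd : HasDerivWithinAt (fun x => Real.log (a x)) (a' / a 0) (Set.Ici 0) 0 :=
    ha.log (by rw [ha0]; norm_num)
  have Llog : Tendsto (fun h => Real.log (a h) / h) (𝓝[>] (0:ℝ)) (𝓝 a') := by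
    have h1 := hasDerivWithinAt_iff_tendsto_slope.mp hlogd
    rw [hsub, ha0, div_one] at h1
    refine h1.congr ?_
    intro x
    simp [slope_def_field, ha0]
  -- the sequence of step sizes
  set u : ℕ → ℝ := fun n => t / n with hu_def
  have hu0 : Tendsto u atTop (𝓝 0) := tendsto_const_div_atTop_nhds_zero_nat t
  have hu : Tendsto u atTop (𝓝[>] (0:ℝ)) := by
    rw [tendsto_nhdsWithin_iff]
    refine ⟨hu0, ?_⟩
    filter_upwards [eventually_gt_atTop 0] with n hn
    exact div_pos ht (by exact_mod_cast hn)
  have sA : Tendsto (fun n => (a (u n) - 1) / u n) atTop (𝓝 a') := La.comp hu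
  have sB : Tendsto (fun n => b (u n) / u n) atTop (𝓝 b') := Lb.comp hu
  have sL : Tendsto (fun n => Real.log (a (u n)) / u n) atTop (𝓝 a') := Llog.comp hu
  have hupos : ∀ᶠ n : ℕ in atTop, 0 < u n := by
    filter_upwards [eventually_gt_atTop 0] with n hn
    exact div_pos ht (by exact_mod_cast hn)
  -- a (u n) → 1
  have aA1 : Tendsto (fun n => a (u n)) atTop (𝓝 1) := by
    have h1 : Tendsto (fun n => ((a (u n) - 1) / u n) * u n + 1) atTop (𝓝 (a' * 0 + 1)) :=
      (sA.mul hu0).add tendsto_const_nhds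
    rw [mul_zero, zero_add] at h1
    refine h1.congr' ?_
    filter_upwards [hupos] with n hn
    field_simp
    ring
  have hApos : ∀ᶠ n : ℕ in atTop, 0 < a (u n) :=
    aA1.eventually (lt_mem_nhds one_pos)
  have hAlt1 : ∀ᶠ n : ℕ in atTop, a (u n) < 1 := by
    have hslope : ∀ᶠ n : ℕ in atTop, (a (u n) - 1) / u n < 0 :=
      sA.eventually (gt_mem_nhds ha')
    filter_upwards [hslope, hupos] with n h1 h2
    have h3 := mul_neg_of_neg_of_pos h1 h2
    rw [div_mul_cancel₀ _ (ne_of_gt h2)] at h3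
    linarith
  -- limit of a(u n)^n
  have nlog : Tendsto (fun n : ℕ => (n : ℝ) * Real.log (a (u n))) atTop (𝓝 (a' * t)) := by
    have h1 : Tendsto (fun n : ℕ => (Real.log (a (u n)) / u n) * t) atTop (𝓝 (a' * t)) :=
      sL.mul_const t
    refine h1.congr' ?_
    filter_upwards [eventually_gt_atTop 0] with n hn
    have hn' : (n : ℝ) ≠ 0 := by positivity
    rw [hu_def]
    field_simp
  have powA : Tendsto (fun n : ℕ => (a (u n)) ^ n) atTop (𝓝 (Real.exp (a' * t))) := by
    have h1 : Tendsto (fun n : ℕ => Real.exp ((n : ℝ) * Real.log (a (u n)))) atTop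
        (𝓝 (Real.exp (a' * t))) := (Real.continuous_exp.tendsto _).comp nlog
    refine h1.congr' ?_
    filter_upwards [hApos] with n hn
    rw [Real.exp_nat_mul, Real.exp_log hn]
  -- limit of b(u n)/(1 - a(u n))
  have sNegA : Tendsto (fun n => (1 - a (u n)) / u n) atTop (𝓝 (-a')) := by
    have := sA.neg
    refine this.congr ?_
    intro n
    ring
  have Bdiv : Tendsto (fun n => b (u n) / (1 - a (u n))) atTop (𝓝 (b' / (-a'))) := by
    have h1 := sB.div sNegA (by linarith : (-a') ≠ 0)
    refine h1.congr' ?_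
    filter_upwards [hupos, hAlt1] with n hn hn1
    have hne1 : u n ≠ 0 := ne_of_gt hn
    have hne2 : (1:ℝ) - a (u n) ≠ 0 := by linarith
    simp only [Pi.div_apply]
    field_simp
  -- the sequence of upper bounds
  set G : ℕ → ℝ := fun n => (a (u n)) ^ n * F 0 + (b (u n) / (1 - a (u n))) * (1 - (a (u n)) ^ n)
    with hG_def
  have hGlim : Tendsto G atTop
      (𝓝 (Real.exp (a' * t) * F 0 + (b' / (-a')) * (1 - Real.exp (a' * t)))) :=
    (powA.mul_const (F 0)).add (Bdiv.mul (tendsto_const_nhds.sub powA))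
  -- eventual bound F t ≤ G n
  have hFG : ∀ᶠ n : ℕ in atTop, F t ≤ G n := by
    filter_upwards [eventually_gt_atTop 0, hApos, hAlt1] with n hn hA hA1
    have hn' : (n : ℝ) ≠ 0 := by positivity
    have hupos' : 0 < u n := div_pos ht (by exact_mod_cast hn)
    have key : ∀ k : ℕ, F (k * u n) ≤ (a (u n)) ^ k * F 0 +
        b (u n) * ∑ i ∈ Finset.range k, (a (u n)) ^ i := by
      intro k
      induction k with
      | zero => simp
      | succ k ih =>
        have hs : (0:ℝ) ≤ k * u n := by positivity
        have h1 : F ((k + 1 : ℕ) * u n) ≤ a (u n) * F (k * u n) + b (u n) := by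
          have := hFab (k * u n) hs (u n) (le_of_lt hupos')
          convert this using 2
          push_cast
          ring
        have h2 : a (u n) * F (k * u n) ≤
            a (u n) * ((a (u n)) ^ k * F 0 + b (u n) * ∑ i ∈ Finset.range k, (a (u n)) ^ i) :=
          mul_le_mul_of_nonneg_left ih (le_of_lt hA)
        calc F ((k + 1 : ℕ) * u n) ≤ a (u n) * F (k * u n) + b (u n) := h1
          _ ≤ a (u n) * ((a (u n)) ^ k * F 0 +
              b (u n) * ∑ i ∈ Finset.range k, (a (u n)) ^ i) + b (u n) := by linarith
          _ = (a (u n)) ^ (k + 1) * F 0 +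
              b (u n) * ∑ i ∈ Finset.range (k + 1), (a (u n)) ^ i := by
            rw [geom_sum_succ]
            ring
    have hFt : F t ≤ (a (u n)) ^ n * F 0 + b (u n) * ∑ i ∈ Finset.range n, (a (u n)) ^ i := by
      have := key n
      rwa [hu_def, mul_div_cancel₀ _ hn'] at this
    have hsum : ∑ i ∈ Finset.range n, (a (u n)) ^ i = ((a (u n)) ^ n - 1) / (a (u n) - 1) :=
      geom_sum_eq (ne_of_lt hA1) n
    rw [hG_def]
    have hne : a (u n) - 1 ≠ 0 := by linarith
    have hne2 : (1:ℝ) - a (u n) ≠ 0 := by linarith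
    have : b (u n) * (((a (u n)) ^ n - 1) / (a (u n) - 1)) =
        (b (u n) / (1 - a (u n))) * (1 - (a (u n)) ^ n) := by
      field_simp
      ring
    calc F t ≤ (a (u n)) ^ n * F 0 + b (u n) * ∑ i ∈ Finset.range n, (a (u n)) ^ i := hFt
      _ = (a (u n)) ^ n * F 0 + (b (u n) / (1 - a (u n))) * (1 - (a (u n)) ^ n) := by
          rw [hsum, this]
  exact ge_of_tendsto hGlim hFG
end

section
/- Let u : [0,∞) → [0,∞) be continuous, let a₁ : [0,∞) → [0,∞) be continuous, and let a₂ : [0,∞) → [0,∞) be continuous with a₂(0) = 1 and differentiable at 0. Suppose that for all s, t ≥ 0, u(s+t) ≤ a₂(t) u(s) + a₁(t) ∫₀^t u(s+r) dr. Then for all t ≥ 0, u(t) ≤ e^{(a₂'(0) + a₁(0)) t} u(0). -/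
open Set Filter Real MeasureTheory
open scoped Topology

lemma crude_bound {u : ℝ → ℝ} {s C₁ C₂ : ℝ}
    (huc : ContinuousOn u (Set.Ici 0)) (hu0 : ∀ t ≥ (0:ℝ), 0 ≤ u t)
    (hs : 0 ≤ s) (hC₁ : 0 ≤ C₁)
    (hineq : ∀ t ∈ Set.Icc (0:ℝ) 1,
      u (s + t) ≤ C₂ * u s + C₁ * ∫ r in (0:ℝ)..t, u (s + r)) :
    ∀ t ∈ Set.Icc (0:ℝ) 1, u (s + t) ≤ C₂ * Real.exp (C₁ * t) * u s := by
  have hus : 0 ≤ u s := hu0 s hs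
  set g : ℝ → ℝ := fun r => u (s + r) with hgdef
  have hgc : ContinuousOn g (Set.Ici 0) := by
    apply huc.comp (continuous_const.add continuous_id).continuousOn
    intro x hx
    exact add_nonneg hs hx
  have hg0 : ∀ r, 0 ≤ r → 0 ≤ g r := fun r hr => hu0 _ (add_nonneg hs hr)
  set F : ℝ → ℝ := fun t => ∫ r in (0:ℝ)..t, g r with hFdef
  have hgint : ∀ t ∈ Set.Icc (0:ℝ) 1, IntervalIntegrable g volume 0 t := by
    intro t ht
    apply ContinuousOn.intervalIntegrable
    apply hgc.mono
    rw [Set.uIcc_of_le ht.1]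
    exact fun x hx => hx.1
  have hFnn : ∀ t ∈ Set.Icc (0:ℝ) 1, 0 ≤ F t := by
    intro t ht
    exact intervalIntegral.integral_nonneg ht.1 (fun r hr => hg0 r hr.1)
  have hFc : ContinuousOn F (Set.Icc 0 1) := by
    have h1 : Set.Icc (0:ℝ) 1 = Set.uIcc (0:ℝ) 1 := (Set.uIcc_of_le zero_le_one).symm
    rw [h1]
    apply intervalIntegral.continuousOn_primitive_interval
    apply ContinuousOn.integrableOn_compact isCompact_uIcc
    apply hgc.mono
    rw [Set.uIcc_of_le (zero_le_one (α := ℝ))]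
    exact fun x hx => hx.1
  have hF' : ∀ x ∈ Set.Ico (0:ℝ) 1, HasDerivWithinAt F (g x) (Set.Ici x) x := by
    intro x hx
    apply intervalIntegral.integral_hasDerivWithinAt_right (hgint x ⟨hx.1, hx.2.le⟩)
    · exact ⟨Set.Ici 0, Filter.mem_of_superset self_mem_nhdsWithin
        (Set.Ioi_subset_Ici_self.trans (Set.Ici_subset_Ici.2 hx.1)),
        hgc.aestronglyMeasurable measurableSet_Ici⟩
    · exact ((hgc x hx.1).mono (Set.Ici_subset_Ici.2 hx.1)).mono Set.Ioi_subset_Ici_self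
  have key : ∀ x ∈ Set.Icc (0:ℝ) 1, ‖F x‖ ≤ gronwallBound 0 C₁ (C₂ * u s) (x - 0) := by
    apply norm_le_gronwallBound_of_norm_deriv_right_le hFc hF'
    · simp [hFdef]
    · intro x hx
      rw [Real.norm_of_nonneg (hg0 x hx.1), Real.norm_of_nonneg (hFnn x ⟨hx.1, hx.2.le⟩)]
      have := hineq x ⟨hx.1, hx.2.le⟩
      linarith
  intro t ht
  have hFb : F t ≤ gronwallBound 0 C₁ (C₂ * u s) t := by
    have := key t ht
    rwa [Real.norm_of_nonneg (hFnn t ht), sub_zero] at this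
  have h1 : u (s + t) ≤ C₂ * u s + C₁ * F t := hineq t ht
  rcases eq_or_lt_of_le hC₁ with h0 | h0
  · rw [← h0] at hFb h1 ⊢
    rw [gronwallBound_K0] at hFb
    simp only [zero_mul, Real.exp_zero, mul_one] at *
    linarith
  · rw [gronwallBound_of_K_ne_0 h0.ne'] at hFb
    have hexp : (1:ℝ) ≤ Real.exp (C₁ * t) := by
      exact Real.one_le_exp (mul_nonneg h0.le ht.1)
    have : C₂ * u s + C₁ * F t ≤ C₂ * Real.exp (C₁ * t) * u s := by
      have h2 : C₁ * F t ≤ C₁ * (C₂ * u s / C₁ * (Real.exp (C₁ * t) - 1)) := by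
        apply mul_le_mul_of_nonneg_left _ hC₁
        simpa using hFb
      have h3 : C₁ * (C₂ * u s / C₁ * (Real.exp (C₁ * t) - 1))
          = C₂ * u s * (Real.exp (C₁ * t) - 1) := by
        field_simp
      nlinarith
    linarith

/-- Expansion lemma: if a nonnegative continuous `u` on `[0,∞)` satisfies
`u (s+t) ≤ a₂ t * u s + a₁ t * ∫₀^t u (s+r) dr` for all `s, t ≥ 0`, where `a₁ ≥ 0` is
continuous, `a₂ ≥ 0` is continuous with `a₂ 0 = 1` and right-differentiable at `0`, then
`u t ≤ e^{(a₂'(0) + a₁ 0) t} u 0` for all `t ≥ 0`. -/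
theorem expansion_lemma (u a₁ a₂ : ℝ → ℝ) (a₂' : ℝ)
    (huc : ContinuousOn u (Set.Ici 0)) (hu0 : ∀ t ≥ (0:ℝ), 0 ≤ u t)
    (ha₁c : ContinuousOn a₁ (Set.Ici 0)) (ha₁0 : ∀ t ≥ (0:ℝ), 0 ≤ a₁ t)
    (ha₂c : ContinuousOn a₂ (Set.Ici 0)) (ha₂0 : ∀ t ≥ (0:ℝ), 0 ≤ a₂ t)
    (ha₂init : a₂ 0 = 1) (ha₂d : HasDerivWithinAt a₂ a₂' (Set.Ici 0) 0)
    (hineq : ∀ s ≥ (0:ℝ), ∀ t ≥ (0:ℝ),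
      u (s + t) ≤ a₂ t * u s + a₁ t * ∫ r in (0:ℝ)..t, u (s + r)) :
    ∀ t ≥ (0:ℝ), u t ≤ Real.exp ((a₂' + a₁ 0) * t) * u 0 := by
  intro t ht
  set L := a₂' + a₁ 0 with hL
  clear_value L
  have hu00 : 0 ≤ u 0 := hu0 0 le_rfl
  have ha₁00 : 0 ≤ a₁ 0 := ha₁0 0 le_rfl
  -- max of a₁, a₂ on [0,1]
  obtain ⟨x₁, hx₁, hmax₁⟩ := isCompact_Icc.exists_isMaxOn (Set.nonempty_Icc.2 zero_le_one)
    (ha₁c.mono Set.Icc_subset_Ici_self)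
  obtain ⟨x₂, hx₂, hmax₂⟩ := isCompact_Icc.exists_isMaxOn (Set.nonempty_Icc.2 zero_le_one)
    (ha₂c.mono Set.Icc_subset_Ici_self)
  set C₁ := a₁ x₁ with hC₁def
  set C₂ := a₂ x₂ with hC₂def
  have hC₁bd : ∀ r ∈ Set.Icc (0:ℝ) 1, a₁ r ≤ C₁ := fun r hr => hmax₁ hr
  have hC₂bd : ∀ r ∈ Set.Icc (0:ℝ) 1, a₂ r ≤ C₂ := fun r hr => hmax₂ hr
  have hC₁0 : 0 ≤ C₁ := ha₁0 _ hx₁.1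
  have hC₂1 : 1 ≤ C₂ := ha₂init ▸ hC₂bd 0 (Set.left_mem_Icc.2 zero_le_one)
  have hC₂0 : (0:ℝ) ≤ C₂ := le_trans zero_le_one hC₂1
  set K := C₁ * (C₂ * Real.exp C₁) with hK
  have hK0 : 0 ≤ K := by positivity
  clear_value K
  clear_value C₁ C₂
  have hintnn : ∀ s ≥ (0:ℝ), ∀ b ≥ (0:ℝ), 0 ≤ ∫ r in (0:ℝ)..b, u (s + r) :=
    fun s hs b hb =>
      intervalIntegral.integral_nonneg hb (fun r hr => hu0 _ (add_nonneg hs hr.1))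
  have hintint : ∀ s ≥ (0:ℝ), ∀ b ≥ (0:ℝ),
      IntervalIntegrable (fun r => u (s + r)) volume 0 b := by
    intro s hs b hb
    apply ContinuousOn.intervalIntegrable
    apply ContinuousOn.mono (s := Set.Ici 0)
    · exact huc.comp (continuous_const.add continuous_id).continuousOn
        (fun x hx => add_nonneg hs hx)
    · rw [Set.uIcc_of_le hb]; exact fun x hx => hx.1
  -- crude bound
  have hcrude : ∀ s ≥ (0:ℝ), ∀ r ∈ Set.Icc (0:ℝ) 1,
      u (s + r) ≤ C₂ * Real.exp (C₁ * r) * u s := by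
    intro s hs
    apply crude_bound huc hu0 hs hC₁0
    intro t' ht'
    calc u (s + t') ≤ a₂ t' * u s + a₁ t' * ∫ r in (0:ℝ)..t', u (s + r) :=
          hineq s hs t' ht'.1
      _ ≤ C₂ * u s + C₁ * ∫ r in (0:ℝ)..t', u (s + r) :=
          add_le_add (mul_le_mul_of_nonneg_right (hC₂bd t' ht') (hu0 s hs))
            (mul_le_mul_of_nonneg_right (hC₁bd t' ht') (hintnn s hs t' ht'.1))
  -- refined bound
  have hB : ∀ s ≥ (0:ℝ), ∀ r ∈ Set.Icc (0:ℝ) 1, u (s + r) ≤ (a₂ r + K * r) * u s := by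
    intro s hs r hr
    have huss : 0 ≤ u s := hu0 s hs
    have hIb : (∫ ρ in (0:ℝ)..r, u (s + ρ)) ≤ r * (C₂ * Real.exp C₁ * u s) := by
      have hmono := intervalIntegral.integral_mono_on hr.1 (hintint s hs r hr.1)
        (intervalIntegrable_const (c := C₂ * Real.exp C₁ * u s)) ?_
      · rw [intervalIntegral.integral_const, smul_eq_mul, sub_zero] at hmono
        exact hmono
      · intro ρ hρ
        calc u (s + ρ) ≤ C₂ * Real.exp (C₁ * ρ) * u s :=
              hcrude s hs ρ ⟨hρ.1, hρ.2.trans hr.2⟩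
          _ ≤ C₂ * Real.exp C₁ * u s := by
              have hexp : Real.exp (C₁ * ρ) ≤ Real.exp C₁ := by
                apply Real.exp_le_exp.2
                nlinarith [hρ.1, hρ.2.trans hr.2]
              exact mul_le_mul_of_nonneg_right
                (mul_le_mul_of_nonneg_left hexp hC₂0) huss
    have h1 := hineq s hs r hr.1
    have h2 : a₁ r * (∫ ρ in (0:ℝ)..r, u (s + ρ)) ≤ C₁ * ∫ ρ in (0:ℝ)..r, u (s + ρ) :=
      mul_le_mul_of_nonneg_right (hC₁bd r hr) (hintnn s hs r hr.1)
    have h3 : C₁ * (∫ ρ in (0:ℝ)..r, u (s + ρ)) ≤ C₁ * (r * (C₂ * Real.exp C₁ * u s)) :=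
      mul_le_mul_of_nonneg_left hIb hC₁0
    calc u (s + r) ≤ a₂ r * u s + a₁ r * ∫ ρ in (0:ℝ)..r, u (s + ρ) := h1
      _ ≤ a₂ r * u s + C₁ * (r * (C₂ * Real.exp C₁ * u s)) := by linarith
      _ = (a₂ r + K * r) * u s := by rw [hK]; ring
  -- key: for every ε > 0
  have key : ∀ ε > (0:ℝ), u t ≤ Real.exp ((L + ε) * t) * u 0 := by
    intro ε hε
    set ε₀ := min 1 (ε / (4 + 2 * a₁ 0)) with hε₀def
    have hden : (0:ℝ) < 4 + 2 * a₁ 0 := by linarith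
    have hε₀pos : 0 < ε₀ := lt_min one_pos (div_pos hε hden)
    have hε₀1 : ε₀ ≤ 1 := min_le_left _ _
    have hε₀ε : ε₀ * (4 + 2 * a₁ 0) ≤ ε := by
      have h := min_le_right 1 (ε / (4 + 2 * a₁ 0))
      rw [← hε₀def] at h
      rw [← le_div_iff₀ hden]
      exact h
    clear_value ε₀
    -- eventual conditions near 0
    have hev₁ : ∀ᶠ h in 𝓝[Set.Ici 0] (0:ℝ), a₂ h ≤ 1 + (a₂' + ε₀) * h := by
      have hlo := hasDerivWithinAt_iff_isLittleO.1 ha₂d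
      filter_upwards [hlo.def hε₀pos, self_mem_nhdsWithin] with h hh hh0
      simp only [sub_zero, smul_eq_mul, ha₂init, Real.norm_eq_abs] at hh
      rw [abs_of_nonneg (show (0:ℝ) ≤ h from hh0)] at hh
      have := (abs_le.1 hh).2
      nlinarith
    have hev₂ : ∀ᶠ h in 𝓝[Set.Ici 0] (0:ℝ), a₁ h < a₁ 0 + ε₀ :=
      Filter.Tendsto.eventually_lt_const (by linarith) (ha₁c 0 Set.self_mem_Ici)
    have hev₃ : ∀ᶠ h in 𝓝[Set.Ici 0] (0:ℝ), a₂ h < 1 + ε₀ := by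
      apply Filter.Tendsto.eventually_lt_const _ (ha₂c 0 Set.self_mem_Ici)
      rw [ha₂init]; linarith
    have hev := hev₁.and (hev₂.and hev₃)
    rw [eventually_nhdsWithin_iff, Metric.eventually_nhds_iff] at hev
    obtain ⟨δ', hδ'pos, hδ'⟩ := hev
    set δ := min (δ' / 2) (min 1 (ε₀ / (K + 1))) with hδdef
    have hδpos : 0 < δ := by
      apply lt_min (by linarith)
      exact lt_min one_pos (div_pos hε₀pos (by linarith))
    have hδδ' : δ < δ' := lt_of_le_of_lt (min_le_left _ _) (by linarith)
    have hδ1 : δ ≤ 1 := le_trans (min_le_right _ _) (min_le_left _ _)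
    have hδK : K * δ ≤ ε₀ := by
      have h1 : δ ≤ ε₀ / (K + 1) := le_trans (min_le_right _ _) (min_le_right _ _)
      rw [le_div_iff₀ (by linarith)] at h1
      nlinarith
    clear_value δ
    have hcond : ∀ x ∈ Set.Icc (0:ℝ) δ,
        a₂ x ≤ 1 + (a₂' + ε₀) * x ∧ a₁ x < a₁ 0 + ε₀ ∧ a₂ x < 1 + ε₀ := by
      intro x hx
      apply hδ' _ hx.1
      rw [Real.dist_eq, sub_zero, abs_of_nonneg hx.1]
      exact lt_of_le_of_lt hx.2 hδδ'
    -- the one-step bound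
    have onestep : ∀ s ≥ (0:ℝ), ∀ h ∈ Set.Icc (0:ℝ) δ,
        u (s + h) ≤ Real.exp ((L + ε) * h) * u s := by
      intro s hs h hh
      have hh0 := hh.1
      have hh1 : h ≤ 1 := hh.2.trans hδ1
      have hKh : K * h ≤ ε₀ := le_trans (mul_le_mul_of_nonneg_left hh.2 hK0) hδK
      have huss : 0 ≤ u s := hu0 s hs
      have hIb : (∫ r in (0:ℝ)..h, u (s + r)) ≤ h * ((1 + ε₀ + K * h) * u s) := by
        have hmono := intervalIntegral.integral_mono_on hh0 (hintint s hs h hh0)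
          (intervalIntegrable_const (c := (1 + ε₀ + K * h) * u s)) ?_
        · rw [intervalIntegral.integral_const, smul_eq_mul, sub_zero] at hmono
          exact hmono
        · intro ρ hρ
          have hρδ : ρ ∈ Set.Icc 0 δ := ⟨hρ.1, hρ.2.trans hh.2⟩
          have h2 : a₂ ρ < 1 + ε₀ := (hcond ρ hρδ).2.2
          have h3 : K * ρ ≤ K * h := mul_le_mul_of_nonneg_left hρ.2 hK0
          calc u (s + ρ) ≤ (a₂ ρ + K * ρ) * u s := hB s hs ρ ⟨hρ.1, hρ.2.trans hh1⟩
            _ ≤ (1 + ε₀ + K * h) * u s := by nlinarith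
      have hstep := hineq s hs h hh0
      have hI0 := hintnn s hs h hh0
      have ha₁h : a₁ h ≤ a₁ 0 + ε₀ := ((hcond h hh).2.1).le
      have ha₂h : a₂ h ≤ 1 + (a₂' + ε₀) * h := (hcond h hh).1
      have hc : u (s + h) ≤ (1 + ((a₂' + ε₀) + (a₁ 0 + ε₀) * (1 + ε₀ + K * h)) * h) * u s := by
        have t1 : a₂ h * u s ≤ (1 + (a₂' + ε₀) * h) * u s :=
          mul_le_mul_of_nonneg_right ha₂h huss
        have t2 : a₁ h * (∫ r in (0:ℝ)..h, u (s + r))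
            ≤ (a₁ 0 + ε₀) * (h * ((1 + ε₀ + K * h) * u s)) := by
          calc a₁ h * (∫ r in (0:ℝ)..h, u (s + r))
              ≤ (a₁ 0 + ε₀) * (∫ r in (0:ℝ)..h, u (s + r)) :=
                mul_le_mul_of_nonneg_right ha₁h hI0
            _ ≤ _ := mul_le_mul_of_nonneg_left hIb (by linarith)
        calc u (s + h) ≤ _ := hstep
          _ ≤ (1 + (a₂' + ε₀) * h) * u s + (a₁ 0 + ε₀) * (h * ((1 + ε₀ + K * h) * u s)) :=
              add_le_add t1 t2
          _ = (1 + ((a₂' + ε₀) + (a₁ 0 + ε₀) * (1 + ε₀ + K * h)) * h) * u s := by ring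
      have hcoef : (a₂' + ε₀) + (a₁ 0 + ε₀) * (1 + ε₀ + K * h) ≤ L + ε := by
        rw [hL]
        nlinarith [mul_le_mul_of_nonneg_left hKh ha₁00,
          mul_le_mul_of_nonneg_left hKh hε₀pos.le,
          mul_le_mul_of_nonneg_left hε₀1 hε₀pos.le, hε₀ε,
          mul_nonneg hK0 hh0]
      have hexp : 1 + (L + ε) * h ≤ Real.exp ((L + ε) * h) := by
        have := Real.add_one_le_exp ((L + ε) * h)
        linarith
      calc u (s + h) ≤ (1 + ((a₂' + ε₀) + (a₁ 0 + ε₀) * (1 + ε₀ + K * h)) * h) * u s := hc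
        _ ≤ (1 + (L + ε) * h) * u s := by
            apply mul_le_mul_of_nonneg_right _ huss
            have := mul_le_mul_of_nonneg_right hcoef hh0
            linarith
        _ ≤ Real.exp ((L + ε) * h) * u s := mul_le_mul_of_nonneg_right hexp huss
    -- iterate
    have hiter : ∀ h ∈ Set.Icc (0:ℝ) δ, ∀ n : ℕ,
        u (n * h) ≤ Real.exp ((L + ε) * (n * h)) * u 0 := by
      intro h hh n
      induction n with
      | zero =>
        simp only [Nat.cast_zero, zero_mul, mul_zero, Real.exp_zero, one_mul]
        exact le_rfl
      | succ n ih =>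
        have hnh0 : 0 ≤ (n : ℝ) * h := mul_nonneg (Nat.cast_nonneg n) hh.1
        calc u ((n + 1 : ℕ) * h) = u ((n : ℝ) * h + h) := by push_cast; ring_nf
          _ ≤ Real.exp ((L + ε) * h) * u ((n : ℝ) * h) := onestep _ hnh0 h hh
          _ ≤ Real.exp ((L + ε) * h) * (Real.exp ((L + ε) * ((n : ℝ) * h)) * u 0) :=
              mul_le_mul_of_nonneg_left ih (Real.exp_nonneg _)
          _ = Real.exp ((L + ε) * ((n + 1 : ℕ) * h)) * u 0 := by
              rw [← mul_assoc, ← Real.exp_add]; push_cast; ring_nf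
    set n : ℕ := Nat.ceil (t / δ) + 1 with hn
    have hn0 : (0:ℝ) < n := by
      have : 0 < n := Nat.succ_pos _
      exact_mod_cast this
    have htn : t / n ∈ Set.Icc 0 δ := by
      constructor
      · exact div_nonneg ht hn0.le
      · rw [div_le_iff₀ hn0]
        calc t = t / δ * δ := by field_simp
          _ ≤ (Nat.ceil (t / δ) : ℝ) * δ :=
              mul_le_mul_of_nonneg_right (Nat.le_ceil _) hδpos.le
          _ ≤ (n : ℝ) * δ := by
              apply mul_le_mul_of_nonneg_right _ hδpos.le
              rw [hn]; push_cast; linarith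
          _ = δ * n := by ring
    have hfin := hiter (t / n) htn n
    rw [mul_comm ((n : ℝ)) (t / n), div_mul_cancel₀ t (ne_of_gt hn0)] at hfin
    exact hfin
  -- pass to the limit ε → 0⁺
  have hc : Continuous fun ε : ℝ => Real.exp ((L + ε) * t) * u 0 :=
    (Real.continuous_exp.comp ((continuous_const.add continuous_id).mul
      continuous_const)).mul continuous_const
  have hlim : Filter.Tendsto (fun ε : ℝ => Real.exp ((L + ε) * t) * u 0) (𝓝[>] (0:ℝ))
      (𝓝 (Real.exp (L * t) * u 0)) := by
    have h2 := (hc.tendsto 0).mono_left (nhdsWithin_le_nhds (s := Set.Ioi (0:ℝ)))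
    have h3 : (L + 0) * t = L * t := by ring
    rw [← h3]
    exact h2
  exact ge_of_tendsto hlim (eventually_mem_nhdsWithin.mono fun ε hε => key ε hε)
end

section
/- Let 0 < a < b, c ∈ ℝ and R₀ ≥ 1, and let r : ℝ → ℝ satisfy r(z) ≥ (7b+a)/8 for all z ≥ R₀ and r(z) ≤ (b+7a)/8 for all z ≤ −R₀. Define φ : ℝ → [0,1] by φ(s) = 1 for s ≥ 1, φ(s) = 0 for s ≤ −1, φ(s) = (1+sin(πs/2))/2 for s ∈ [−1,1]; define h : ℝ → ℝ by h(s) = |s| for |s| ≥ 1 and h(s) = (s²+1)/2 for |s| ≤ 1; and set V(x,y) = e^{((b−a)/4) h(x)} ( (5a+3b)/(2(b−a)) + φ(yx) ) for x ∈ ℝ, y ∈ {−1,1}. Then for every x ∈ ℝ and y ∈ {−1,1} with |x| ≥ R₀ + |c|, the function x ↦ V(x,y) is differentiable at x and y · ∂ₓV(x,y) + r(y(x−c)) (V(x,−y) − V(x,y)) ≤ −((b−a)²/(10(a+b))) · V(x,y). -/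
/-- The interpolation function `φ`: `φ s = 1` for `s ≥ 1`, `φ s = 0` for `s ≤ -1`, and
`φ s = (1 + sin(πs/2))/2` for `s ∈ [-1,1]`. -/
noncomputable def phi (s : ℝ) : ℝ :=
  if 1 ≤ s then 1 else if s ≤ -1 then 0 else (1 + Real.sin (Real.pi * s / 2)) / 2

/-- The smoothed absolute value `h`: `h s = |s|` for `|s| ≥ 1` and `h s = (s²+1)/2` for
`|s| ≤ 1`. -/
noncomputable def hfun (s : ℝ) : ℝ :=
  if 1 ≤ |s| then |s| else (s ^ 2 + 1) / 2

/-- The Lyapunov function `V(x,y) = e^{((b-a)/4) h(x)} ((5a+3b)/(2(b-a)) + φ(yx))` for the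
run-and-tumble process. -/
noncomputable def Vrtp (a b x y : ℝ) : ℝ :=
  Real.exp ((b - a) / 4 * hfun x) * ((5 * a + 3 * b) / (2 * (b - a)) + phi (y * x))

open Set in
lemma glue {f g h : ℝ → ℝ} {d x u v : ℝ} (hu : u < x) (hv : x < v)
    (hf : HasDerivAt f d x) (hg : HasDerivAt g d x)
    (h1 : ∀ s ∈ Icc u x, h s = f s) (h2 : ∀ s ∈ Icc x v, h s = g s) :
    HasDerivAt h d x := by
  have H1 : HasDerivWithinAt h d (Icc u x) x :=
    (hf.hasDerivWithinAt).congr h1 (h1 x ⟨hu.le, le_rfl⟩)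
  have H2 : HasDerivWithinAt h d (Icc x v) x :=
    (hg.hasDerivWithinAt).congr h2 (h2 x ⟨le_rfl, hv.le⟩)
  have H := H1.union H2
  rw [Icc_union_Icc_eq_Icc hu.le hv.le] at H
  exact H.hasDerivAt (Icc_mem_nhds hu hv)

lemma phi_of_ge {s : ℝ} (h : 1 ≤ s) : phi s = 1 := if_pos h
lemma phi_of_le {s : ℝ} (h : s ≤ -1) : phi s = 0 := by
  unfold phi; rw [if_neg (by linarith), if_pos h]

lemma sin_aux (t : ℝ) :
    HasDerivAt (fun t => (1 + Real.sin (Real.pi * t / 2)) / 2)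
      (Real.cos (Real.pi * t / 2) * (Real.pi * 1 / 2) / 2) t := by
  have h1 : HasDerivAt (fun t : ℝ => Real.pi * t / 2) (Real.pi * 1 / 2) t :=
    ((hasDerivAt_id t).const_mul Real.pi).div_const 2
  exact (((Real.hasDerivAt_sin _).comp t h1).const_add 1).div_const 2

lemma phi_hasDerivAt {s : ℝ} (h : 1 ≤ |s|) : HasDerivAt phi 0 s := by
  rcases le_abs.mp h with h1 | h1
  · rcases eq_or_lt_of_le h1 with rfl | h2
    · have hg : HasDerivAt (fun t => (1 + Real.sin (Real.pi * t / 2)) / 2) 0 1 := by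
        simpa using sin_aux 1
      refine glue (u := 0) (v := 2) (by norm_num) (by norm_num) hg (hasDerivAt_const _ 1) ?_ ?_
      · intro t ht
        unfold phi
        rcases eq_or_lt_of_le ht.2 with rfl | h3
        · rw [if_pos le_rfl]
          norm_num [Real.sin_pi_div_two]
        · rw [if_neg (by linarith), if_neg (by linarith [ht.1])]
      · intro t ht; exact phi_of_ge ht.1
    · exact (hasDerivAt_const s 1).congr_of_eventuallyEq <|
        Filter.eventually_of_mem (Ioi_mem_nhds h2) fun t ht => phi_of_ge (le_of_lt ht)
  · have h1' : s ≤ -1 := by linarith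
    rcases eq_or_lt_of_le h1' with rfl | h2
    · have hg : HasDerivAt (fun t => (1 + Real.sin (Real.pi * t / 2)) / 2) 0 (-1) := by
        have := sin_aux (-1)
        norm_num at this
        rwa [show (-Real.pi / 2 : ℝ) = -(Real.pi / 2) by ring, Real.cos_neg,
          Real.cos_pi_div_two, zero_mul, zero_div] at this
      refine glue (u := -2) (v := 0) (by norm_num) (by norm_num) (hasDerivAt_const _ 0) hg ?_ ?_
      · intro t ht; exact phi_of_le ht.2
      · intro t ht
        unfold phi
        rcases eq_or_lt_of_le ht.1 with h4 | h3
        · subst h4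
          rw [if_neg (by norm_num), if_pos le_rfl]
          rw [show Real.pi * -1 / 2 = -(Real.pi / 2) by ring, Real.sin_neg,
            Real.sin_pi_div_two]
          norm_num
        · rw [if_neg (by linarith [ht.2]), if_neg (by linarith)]
    · exact (hasDerivAt_const s 0).congr_of_eventuallyEq <|
        Filter.eventually_of_mem (Iio_mem_nhds h2) fun t ht => phi_of_le (le_of_lt ht)

lemma hfun_of {s : ℝ} (h : 1 ≤ |s|) : hfun s = |s| := if_pos h

lemma sq_aux (t : ℝ) : HasDerivAt (fun t : ℝ => (t ^ 2 + 1) / 2) t t := by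
  have h := ((hasDerivAt_pow 2 t).add_const 1).div_const 2
  refine h.congr_deriv ?_
  norm_num

lemma hfun_hasDerivAt_pos {s : ℝ} (h : 1 ≤ s) : HasDerivAt hfun 1 s := by
  have hid : ∀ u : ℝ, HasDerivAt (fun t : ℝ => t) 1 u := fun u => hasDerivAt_id u
  rcases eq_or_lt_of_le h with rfl | h2
  · refine glue (u := 0) (v := 2) (by norm_num) (by norm_num) (sq_aux 1) (hid 1) ?_ ?_
    · intro t ht
      unfold hfun
      rcases eq_or_lt_of_le ht.2 with rfl | h3
      · rw [if_pos (by rw [abs_one])]; norm_num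
      · rw [if_neg (by rw [abs_of_nonneg ht.1]; push_neg; exact h3)]
    · intro t ht
      unfold hfun
      rw [if_pos (by rw [abs_of_nonneg (by linarith [ht.1])]; exact ht.1),
        abs_of_nonneg (by linarith [ht.1])]
  · refine (hid s).congr_of_eventuallyEq <|
      Filter.eventually_of_mem (Ioi_mem_nhds h2) fun t ht => ?_
    have ht' : (1:ℝ) ≤ t := le_of_lt ht
    unfold hfun
    rw [if_pos (by rw [abs_of_nonneg (by linarith)]; exact ht'),
      abs_of_nonneg (by linarith)]

lemma hfun_hasDerivAt_neg {s : ℝ} (h : s ≤ -1) : HasDerivAt hfun (-1) s := by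
  have hneg : ∀ u : ℝ, HasDerivAt (fun t : ℝ => -t) (-1) u := fun u => (hasDerivAt_id u).neg
  rcases eq_or_lt_of_le h with rfl | h2
  · refine glue (u := -2) (v := 0) (by norm_num) (by norm_num) (hneg (-1)) (sq_aux (-1)) ?_ ?_
    · intro t ht
      unfold hfun
      rw [if_pos (by rw [abs_of_nonpos (by linarith [ht.2])]; linarith [ht.2]),
        abs_of_nonpos (by linarith [ht.2])]
    · intro t ht
      unfold hfun
      rcases eq_or_lt_of_le ht.1 with h4 | h3
      · subst h4
        rw [if_pos (by rw [abs_neg, abs_one])]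
        norm_num
      · rw [if_neg (by rw [abs_of_nonpos ht.2]; push_neg; linarith)]
  · refine (hneg s).congr_of_eventuallyEq <|
      Filter.eventually_of_mem (Iio_mem_nhds h2) fun t ht => ?_
    have ht' : t ≤ -1 := le_of_lt ht
    unfold hfun
    rw [if_pos (by rw [abs_of_nonpos (by linarith)]; linarith),
      abs_of_nonpos (by linarith)]

lemma hfun_hasDerivAt_sgn {x y : ℝ} (hy : y = 1 ∨ y = -1) (h : 1 ≤ y * x) :
    HasDerivAt hfun y x := by
  rcases hy with rfl | rfl
  · rw [one_mul] at h; exact hfun_hasDerivAt_pos h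
  · rw [neg_one_mul] at h; exact hfun_hasDerivAt_neg (by linarith)

lemma Vrtp_hasDerivAt {a b x y σ : ℝ} (hhf : HasDerivAt hfun σ x) (hp : 1 ≤ |y * x|) :
    HasDerivAt (fun z => Vrtp a b z y)
      (Real.exp ((b - a) / 4 * hfun x) * ((b - a) / 4 * σ) *
          ((5 * a + 3 * b) / (2 * (b - a)) + phi (y * x))
        + Real.exp ((b - a) / 4 * hfun x) * 0) x := by
  have hexp : HasDerivAt (fun z => Real.exp ((b - a) / 4 * hfun z))
      (Real.exp ((b - a) / 4 * hfun x) * ((b - a) / 4 * σ)) x := (hhf.const_mul _).exp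
  have hmul : HasDerivAt (fun z : ℝ => y * z) y x := by
    simpa using (hasDerivAt_id x).const_mul y
  have hphi : HasDerivAt (fun z => phi (y * z)) 0 x := by
    have h := (phi_hasDerivAt hp).comp x hmul
    rw [zero_mul] at h
    exact h
  exact hexp.mul (hphi.const_add _)

lemma drift_case1 {a b R x y : ℝ} (ha : 0 < a) (hab : a < b)
    (hR : (7 * b + a) / 8 ≤ R) (hy : y = 1 ∨ y = -1) (hs : 1 ≤ y * x) :
    ∃ d : ℝ, HasDerivAt (fun z => Vrtp a b z y) d x ∧
      y * d + R * (Vrtp a b x (-y) - Vrtp a b x y) ≤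
        -((b - a) ^ 2 / (10 * (a + b))) * Vrtp a b x y := by
  have hyy : y * y = 1 := by rcases hy with rfl | rfl <;> norm_num
  have hhf := hfun_hasDerivAt_sgn hy hs
  have habs : 1 ≤ |y * x| := le_trans hs (le_abs_self _)
  refine ⟨_, Vrtp_hasDerivAt hhf habs, ?_⟩
  have hb1 : (0:ℝ) < b - a := by linarith
  have hb2 : (0:ℝ) < a + b := by linarith
  have hE : 0 < Real.exp ((b - a) / 4 * hfun x) := Real.exp_pos _
  set E := Real.exp ((b - a) / 4 * hfun x) with hEdef
  set C := (5 * a + 3 * b) / (2 * (b - a)) with hCdef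
  have hp1 : phi (y * x) = 1 := phi_of_ge hs
  have hp2 : phi (-y * x) = 0 := by rw [neg_mul]; exact phi_of_le (by linarith)
  unfold Vrtp
  rw [← hEdef, ← hCdef, hp1, hp2]
  have key : (b - a) / 4 * (C + 1) + (b - a) ^ 2 / (10 * (a + b)) * (C + 1) ≤ R := by
    refine le_trans ?_ hR
    rw [hCdef, ← sub_nonneg]
    have h1 : (5 * a + 3 * b) / (2 * (b - a)) + 1 = (3 * a + 5 * b) / (2 * (b - a)) := by
      field_simp; ring
    rw [h1]
    have e : (7 * b + a) / 8 - ((b - a) / 4 * ((3 * a + 5 * b) / (2 * (b - a)))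
        + (b - a) ^ 2 / (10 * (a + b)) * ((3 * a + 5 * b) / (2 * (b - a))))
        = (b - a) * (2 * a) / (20 * (a + b)) := by
      field_simp
      ring
    rw [e]
    positivity
  have hleft : y * (E * ((b - a) / 4 * y) * (C + 1) + E * 0)
      + R * (E * (C + 0) - E * (C + 1)) = E * ((b - a) / 4 * (C + 1) - R) := by
    linear_combination E * ((b - a) / 4) * (C + 1) * hyy
  rw [hleft, show -((b - a) ^ 2 / (10 * (a + b))) * (E * (C + 1))
      = E * (-((b - a) ^ 2 / (10 * (a + b)) * (C + 1))) by ring]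
  exact mul_le_mul_of_nonneg_left (by linarith) hE.le

lemma drift_case2 {a b R x y : ℝ} (ha : 0 < a) (hab : a < b)
    (hR : R ≤ (b + 7 * a) / 8) (hy : y = 1 ∨ y = -1) (hs : y * x ≤ -1) :
    ∃ d : ℝ, HasDerivAt (fun z => Vrtp a b z y) d x ∧
      y * d + R * (Vrtp a b x (-y) - Vrtp a b x y) ≤
        -((b - a) ^ 2 / (10 * (a + b))) * Vrtp a b x y := by
  have hyy : y * y = 1 := by rcases hy with rfl | rfl <;> norm_num
  have hy' : -y = 1 ∨ -y = -1 := by rcases hy with rfl | rfl <;> norm_num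
  have hhf : HasDerivAt hfun (-y) x := hfun_hasDerivAt_sgn hy' (by rw [neg_mul]; linarith)
  have habs : 1 ≤ |y * x| := by rw [abs_of_nonpos (by linarith)]; linarith
  refine ⟨_, Vrtp_hasDerivAt hhf habs, ?_⟩
  have hb1 : (0:ℝ) < b - a := by linarith
  have hb2 : (0:ℝ) < a + b := by linarith
  have hE : 0 < Real.exp ((b - a) / 4 * hfun x) := Real.exp_pos _
  set E := Real.exp ((b - a) / 4 * hfun x) with hEdef
  set C := (5 * a + 3 * b) / (2 * (b - a)) with hCdef
  have hp1 : phi (y * x) = 0 := phi_of_le hs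
  have hp2 : phi (-y * x) = 1 := by rw [neg_mul]; exact phi_of_ge (by linarith)
  unfold Vrtp
  rw [← hEdef, ← hCdef, hp1, hp2]
  have key : -((b - a) / 4) * C + R + (b - a) ^ 2 / (10 * (a + b)) * C ≤ 0 := by
    have e : (b + 7 * a) / 8 + (-((b - a) / 4) * C + (b - a) ^ 2 / (10 * (a + b)) * C)
        = -((b - a) * (2 * b) / (20 * (a + b))) := by
      rw [hCdef]; field_simp; ring
    have hnn : (0:ℝ) ≤ (b - a) * (2 * b) / (20 * (a + b)) := div_nonneg (mul_nonneg hb1.le (by linarith)) (by linarith)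
    linarith
  have hleft : y * (E * ((b - a) / 4 * -y) * (C + 0) + E * 0)
      + R * (E * (C + 1) - E * (C + 0)) = E * (-((b - a) / 4) * C + R) := by
    linear_combination (-(E * ((b - a) / 4) * C)) * hyy
  rw [hleft, show -((b - a) ^ 2 / (10 * (a + b))) * (E * (C + 0))
      = E * (-((b - a) ^ 2 / (10 * (a + b)) * C)) by ring]
  exact mul_le_mul_of_nonneg_left (by linarith) hE.le


/-- Lyapunov drift inequality for the run-and-tumble process: away from the compact set
`{|x| ≤ R₀ + |c|}`, `y ∂ₓV(x,y) + r(y(x-c))(V(x,-y) - V(x,y)) ≤ -((b-a)²/(10(a+b))) V(x,y)`. -/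
theorem rtp_lyapunov_drift (a b c R₀ : ℝ) (ha : 0 < a) (hab : a < b) (hR₀ : 1 ≤ R₀)
    (r : ℝ → ℝ)
    (hr_plus : ∀ z, R₀ ≤ z → (7 * b + a) / 8 ≤ r z)
    (hr_minus : ∀ z, z ≤ -R₀ → r z ≤ (b + 7 * a) / 8)
    (x y : ℝ) (hy : y = 1 ∨ y = -1) (hx : R₀ + |c| ≤ |x|) :
    ∃ d : ℝ, HasDerivAt (fun z => Vrtp a b z y) d x ∧
      y * d + r (y * (x - c)) * (Vrtp a b x (-y) - Vrtp a b x y) ≤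
        -((b - a) ^ 2 / (10 * (a + b))) * Vrtp a b x y := by
  have hyabs : |y| = 1 := by rcases hy with rfl | rfl <;> simp
  have hxyabs : |y * x| = |x| := by rw [abs_mul, hyabs, one_mul]
  have hcabs : y * c ≤ |c| := by
    calc y * c ≤ |y * c| := le_abs_self _
    _ = |c| := by rw [abs_mul, hyabs, one_mul]
  have hcabs' : -|c| ≤ y * c := by
    have : |y * c| = |c| := by rw [abs_mul, hyabs, one_mul]
    linarith [neg_abs_le (y * c), this]
  have hx' : R₀ + |c| ≤ |y * x| := by rw [hxyabs]; exact hx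
  have hc0 : (0:ℝ) ≤ |c| := abs_nonneg c
  rcases le_abs.mp hx' with hs | hs
  · -- y * x ≥ R₀ + |c| ≥ 1
    have hz : R₀ ≤ y * (x - c) := by
      have : y * (x - c) = y * x - y * c := by ring
      rw [this]; linarith
    exact drift_case1 ha hab (hr_plus _ hz) hy (by linarith)
  · -- y * x ≤ -(R₀ + |c|)
    have hs' : y * x ≤ -(R₀ + |c|) := by linarith
    have hz : y * (x - c) ≤ -R₀ := by
      have : y * (x - c) = y * x - y * c := by ring
      rw [this]; linarith
    exact drift_case2 ha hab (hr_minus _ hz) hy (by linarith)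
end

section
/- Let ρ > 0, R ≥ 0, let g₁, g₂ : [0,∞) → [0,∞) be measurable with g₁(x) ≥ 2ρ for all x ≥ R, and let ν be a probability measure on [0,∞) such that ∫ g₂(x+y) dν(y) < ∞ for all x ≥ 0. Define λ(x) = 1 + g₁(x) + ∫₀^∞ g₂(x+y) dν(y) and V(x) = e^{ρx}. Then for all x ≥ 0, ρ V(x) + λ(x) (V(x/2) − V(x)) ≤ −(1/2) V(x) + (1/2)(1+2ρ)(1 + e^{ρR}). In particular, for x ≥ R one has ρ V(x) + λ(x)(V(x/2) − V(x)) ≤ −(1/2) V(x) + 1/2 + ρ. -/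
open MeasureTheory

/-- Lyapunov drift inequality for the mean-field TCP process: with jump rate
`λ(x) = 1 + g₁(x) + ∫ g₂(x+y) dν(y)` and `V(x) = e^{ρx}`, for all `x ≥ 0`
`ρ V(x) + λ(x)(V(x/2) - V(x)) ≤ -(1/2) V(x) + (1/2)(1+2ρ)(1+e^{ρR})`, and for
all `x ≥ R`, `ρ V(x) + λ(x)(V(x/2) - V(x)) ≤ -(1/2) V(x) + 1/2 + ρ`. -/
theorem tcp_lyapunov_drift (ρ R : ℝ) (hρ : 0 < ρ) (hR : 0 ≤ R)
    (g₁ g₂ : ℝ → ℝ) (hg₁m : Measurable g₁) (hg₂m : Measurable g₂)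
    (hg₁0 : ∀ x ≥ (0:ℝ), 0 ≤ g₁ x) (hg₂0 : ∀ x ≥ (0:ℝ), 0 ≤ g₂ x)
    (hg₁R : ∀ x ≥ R, 2 * ρ ≤ g₁ x)
    (ν : Measure ℝ) [IsProbabilityMeasure ν] (hν : ν (Set.Iio 0) = 0)
    (hint : ∀ x ≥ (0:ℝ), Integrable (fun y => g₂ (x + y)) ν) :
    (∀ x ≥ (0:ℝ),
        ρ * Real.exp (ρ * x) +
            (1 + g₁ x + ∫ y, g₂ (x + y) ∂ν) *
              (Real.exp (ρ * (x / 2)) - Real.exp (ρ * x)) ≤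
          -(1 / 2) * Real.exp (ρ * x) +
            (1 / 2) * (1 + 2 * ρ) * (1 + Real.exp (ρ * R))) ∧
      (∀ x ≥ R,
        ρ * Real.exp (ρ * x) +
            (1 + g₁ x + ∫ y, g₂ (x + y) ∂ν) *
              (Real.exp (ρ * (x / 2)) - Real.exp (ρ * x)) ≤
          -(1 / 2) * Real.exp (ρ * x) + 1 / 2 + ρ) := by

  have hae : ∀ᵐ y ∂ν, 0 ≤ y := by
    rw [ae_iff]
    convert hν using 2
    ext y; simp [not_le]
  have hI : ∀ x ≥ (0:ℝ), 0 ≤ ∫ y, g₂ (x + y) ∂ν := by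
    intro x hx
    apply integral_nonneg_of_ae
    filter_upwards [hae] with y hy
    exact hg₂0 _ (by linarith)
  have key2 : ∀ x ≥ R,
      ρ * Real.exp (ρ * x) +
          (1 + g₁ x + ∫ y, g₂ (x + y) ∂ν) *
            (Real.exp (ρ * (x / 2)) - Real.exp (ρ * x)) ≤
        -(1 / 2) * Real.exp (ρ * x) + 1 / 2 + ρ := by
    intro x hx
    have hx0 : (0:ℝ) ≤ x := le_trans hR hx
    have hV : Real.exp (ρ * x) = Real.exp (ρ * (x / 2)) ^ 2 := by
      rw [← Real.exp_nat_mul]; ring_nf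
    set s := Real.exp (ρ * (x / 2)) with hs
    have hs1 : 1 ≤ s := Real.one_le_exp (by positivity)
    have hlam : 1 + 2 * ρ ≤ 1 + g₁ x + ∫ y, g₂ (x + y) ∂ν := by
      have h1 := hg₁R x hx; have h2 := hI x hx0; linarith
    have hsV : s - s ^ 2 ≤ 0 := by nlinarith
    have hmul : (1 + g₁ x + ∫ y, g₂ (x + y) ∂ν) * (s - s ^ 2) ≤
        (1 + 2 * ρ) * (s - s ^ 2) := mul_le_mul_of_nonpos_right hlam hsV
    rw [hV]
    nlinarith [sq_nonneg (s - 1)]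
  refine ⟨?_, key2⟩
  intro x hx
  have hexpR : 1 ≤ Real.exp (ρ * R) := Real.one_le_exp (by positivity)
  rcases le_or_gt R x with h | h
  · have := key2 x h
    nlinarith
  · have hWV : Real.exp (ρ * (x / 2)) ≤ Real.exp (ρ * x) :=
      Real.exp_le_exp.mpr (by nlinarith)
    have hlampos : 0 ≤ 1 + g₁ x + ∫ y, g₂ (x + y) ∂ν := by
      have h1 := hg₁0 x hx; have h2 := hI x hx; linarith
    have hmul : (1 + g₁ x + ∫ y, g₂ (x + y) ∂ν) *
        (Real.exp (ρ * (x / 2)) - Real.exp (ρ * x)) ≤ 0 :=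
      mul_nonpos_of_nonneg_of_nonpos hlampos (by linarith)
    have hVR : Real.exp (ρ * x) ≤ Real.exp (ρ * R) :=
      Real.exp_le_exp.mpr (by nlinarith)
    have hV1 : 1 ≤ Real.exp (ρ * x) := Real.one_le_exp (by positivity)
    nlinarith
end
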